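/- arXiv:2009.07401 — 2 statements merged into one kernel-verified Lean document; each statement's English description precedes it below -/
import Mathlib

section
/- Let X be a vector lattice with X~ separating points of X, and suppose the canonical image of X is a regular sublattice of X~~. If a net x_α bbuo-converges to x in X, then x̂_α order converges to x̂ in X~~. -/
set_option linter.unusedSectionVars false
set_option maxHeartbeats 1000000

open Filter Set

section ODual

variable (E : Type*) [AddCommGroup E] [Preorder E] [Module ℝ E]

/-- The order (bounded) dual: linear functionals bounded on order intervals. -/
noncomputable def obDual : Submodule ℝ (E →ₗ[ℝ] ℝ) where
  carrier := {f | ∀ w : E, ∃ M : ℝ, ∀ x : E, -w ≤ x → x ≤ w → |f x| ≤ M}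
  zero_mem' := fun w => ⟨0, fun x _ _ => by simp⟩
  add_mem' := fun {f g} hf hg w => by
    obtain ⟨M, hM⟩ := hf w
    obtain ⟨N, hN⟩ := hg w
    refine ⟨M + N, fun x h1 h2 => ?_⟩
    calc |(f + g) x| = |f x + g x| := by simp
    _ ≤ |f x| + |g x| := abs_add_le _ _
    _ ≤ M + N := add_le_add (hM x h1 h2) (hN x h1 h2)
  smul_mem' := fun c f hf => by
    intro w
    obtain ⟨M, hM⟩ := hf w
    refine ⟨|c| * M, fun x h1 h2 => ?_⟩
    calc |(c • f) x| = |c| * |f x| := by simp [abs_mul]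
    _ ≤ |c| * M := mul_le_mul_of_nonneg_left (hM x h1 h2) (abs_nonneg c)

/-- The pointwise-on-positive-elements (pre)order on a space of functionals. -/
instance instSubPre (Y : Submodule ℝ (E →ₗ[ℝ] ℝ)) : Preorder Y where
  le f g := ∀ x : E, 0 ≤ x → (f : E →ₗ[ℝ] ℝ) x ≤ (g : E →ₗ[ℝ] ℝ) x
  le_refl f x _ := le_rfl
  le_trans f g h h1 h2 x hx := (h1 x hx).trans (h2 x hx)

variable {E}

theorem subPre_le_iff {Y : Submodule ℝ (E →ₗ[ℝ] ℝ)} {f g : Y} :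
    f ≤ g ↔ ∀ x : E, 0 ≤ x → (f : E →ₗ[ℝ] ℝ) x ≤ (g : E →ₗ[ℝ] ℝ) x := Iff.rfl

/-- Order convergence of a net to a limit (sandwich form: eventually
`l - d ≤ x_α ≤ l + d` for every `d` in a set directed downward to `0`). -/
def OConvTo {ι : Type*} [Preorder ι] (x : ι → E) (l : E) : Prop :=
  ∃ D : Set E, D.Nonempty ∧ DirectedOn (· ≥ ·) D ∧ IsGLB D 0 ∧
    ∀ d ∈ D, ∃ α₀ : ι, ∀ α, α₀ ≤ α → l - d ≤ x α ∧ x α ≤ l + d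

/-- Order continuity of a linear functional: `f(x_α) → 0` whenever `x_α ↓ 0`. -/
def OrdContE (f : E →ₗ[ℝ] ℝ) : Prop :=
  ∀ D : Set E, D.Nonempty → DirectedOn (· ≥ ·) D → IsGLB D 0 →
    ∀ ε : ℝ, 0 < ε → ∃ d ∈ D, ∀ e ∈ D, e ≤ d → |f e| < ε

end ODual

section VL

variable (X : Type*) [Lattice X] [AddCommGroup X]
  [CovariantClass X X (· + ·) (· ≤ ·)] [Module ℝ X] [PosSMulMono ℝ X]

variable {X} in
/-- Unbounded order convergence: `|x_α - l| ⊓ u →o 0` for every `u ≥ 0`. -/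
def uoConvTo {ι : Type*} [Preorder ι] (x : ι → X) (l : X) : Prop :=
  ∀ u : X, 0 ≤ u → OConvTo (fun α => |x α - l| ⊓ u) (0 : X)

/-- The canonical evaluation of `x ∈ X` on a space `Y` of functionals on `X`. -/
def hatFun (Y : Submodule ℝ (X →ₗ[ℝ] ℝ)) (x : X) : Y →ₗ[ℝ] ℝ where
  toFun f := (f : X →ₗ[ℝ] ℝ) x
  map_add' f g := by simp
  map_smul' c f := by simp

theorem hatFun_mem (Y : Submodule ℝ (X →ₗ[ℝ] ℝ)) (x : X) :
    hatFun X Y x ∈ obDual Y := by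
  intro w
  refine ⟨(w : X →ₗ[ℝ] ℝ) (x⁺) + (w : X →ₗ[ℝ] ℝ) (x⁻), fun f h1 h2 => ?_⟩
  have hp : (0 : X) ≤ x⁺ := posPart_nonneg x
  have hn : (0 : X) ≤ x⁻ := negPart_nonneg x
  have e1 := (subPre_le_iff.mp h1) _ hp
  have e2 := (subPre_le_iff.mp h2) _ hp
  have e3 := (subPre_le_iff.mp h1) _ hn
  have e4 := (subPre_le_iff.mp h2) _ hn
  have c1 : -((w : X →ₗ[ℝ] ℝ) (x⁺)) ≤ (f : X →ₗ[ℝ] ℝ) (x⁺) := by simpa using e1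
  have c3 : -((w : X →ₗ[ℝ] ℝ) (x⁻)) ≤ (f : X →ₗ[ℝ] ℝ) (x⁻) := by simpa using e3
  have key : (f : X →ₗ[ℝ] ℝ) x
      = (f : X →ₗ[ℝ] ℝ) (x⁺) - (f : X →ₗ[ℝ] ℝ) (x⁻) := by
    rw [← map_sub, posPart_sub_negPart]
  show |(f : X →ₗ[ℝ] ℝ) x| ≤ _
  rw [key]
  have a1 : |(f : X →ₗ[ℝ] ℝ) (x⁺)| ≤ (w : X →ₗ[ℝ] ℝ) (x⁺) := abs_le.mpr ⟨c1, e2⟩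
  have a2 : |(f : X →ₗ[ℝ] ℝ) (x⁻)| ≤ (w : X →ₗ[ℝ] ℝ) (x⁻) := abs_le.mpr ⟨c3, e4⟩
  have := abs_sub ((f : X →ₗ[ℝ] ℝ) (x⁺)) ((f : X →ₗ[ℝ] ℝ) (x⁻))
  linarith

/-- The canonical embedding of `X` into the order dual of `Y ⊆ X~`. -/
def hatEl (Y : Submodule ℝ (X →ₗ[ℝ] ℝ)) (x : X) : obDual Y :=
  ⟨hatFun X Y x, hatFun_mem X Y x⟩

/-- The order of `X~~` (same as `instSubPre`, which instance search no longer finds here). -/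
noncomputable instance instBidualPre : Preorder ↥(obDual ↥(obDual X)) :=
  instSubPre ↥(obDual X) (obDual ↥(obDual X))

/-- `X~` separates the points of `X`. -/
def SepPoints : Prop := ∀ x : X, x ≠ 0 → ∃ f : obDual X, (f : X →ₗ[ℝ] ℝ) x ≠ 0

/-- The canonical image of `X` in `X~~` is a regular sublattice:
`x_α ↓ 0` in `X` implies `x̂_α ↓ 0` in `X~~`. -/
def HatRegular : Prop :=
  ∀ D : Set X, D.Nonempty → DirectedOn (· ≥ ·) D → IsGLB D 0 →
    IsGLB (hatEl X (obDual X) '' D) (0 : obDual ↥(obDual X))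

variable {X} in
/-- The net `x̂_α` is eventually order bounded in `X~~`. -/
def HatEvOB {ι : Type*} [Preorder ι] (x : ι → X) : Prop :=
  ∃ (b t : obDual ↥(obDual X)) (α₀ : ι), ∀ α, α₀ ≤ α →
    b ≤ hatEl X (obDual X) (x α) ∧ hatEl X (obDual X) (x α) ≤ t

variable {X} in
/-- Bidual bounded uo-convergence. -/
def bbuoConvTo {ι : Type*} [Preorder ι] (x : ι → X) (l : X) : Prop :=
  uoConvTo x l ∧ HatEvOB x

/-- `X` has the `b`-property: every subset of `X` whose canonical image is
order bounded in `X~~` is order bounded in `X`. -/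
def HasBProp : Prop :=
  ∀ A : Set X,
    (∃ b t : obDual ↥(obDual X), ∀ a ∈ A,
        b ≤ hatEl X (obDual X) a ∧ hatEl X (obDual X) a ≤ t) →
    ∃ b t : X, ∀ a ∈ A, b ≤ a ∧ a ≤ t

/-- The Archimedean property for a lattice-ordered group. -/
def IsArch : Prop := ∀ x y : X, 0 ≤ x → (∀ n : ℕ, n • x ≤ y) → x = 0

end VL

set_option synthInstance.maxHeartbeats 1000000

/-! ### Auxiliary machinery: Riesz–Kantorovich style constructions in order duals -/

section AuxOrder

variable {E : Type*} [AddCommGroup E] [Preorder E] [Module ℝ E]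

theorem od_le_def {Y : Submodule ℝ (E →ₗ[ℝ] ℝ)} {f g : Y} (h : f ≤ g)
    {x : E} (hx : 0 ≤ x) : (f : E →ₗ[ℝ] ℝ) x ≤ (g : E →ₗ[ℝ] ℝ) x := h x hx

instance instSubCov (Y : Submodule ℝ (E →ₗ[ℝ] ℝ)) :
    CovariantClass Y Y (· + ·) (· ≤ ·) := by
  constructor
  intro h f g hle x hx
  have := hle x hx
  show ((h + f : Y) : E →ₗ[ℝ] ℝ) x ≤ ((h + g : Y) : E →ₗ[ℝ] ℝ) x
  simp only [Submodule.coe_add, LinearMap.add_apply]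
  linarith

instance instSubCovSwap (Y : Submodule ℝ (E →ₗ[ℝ] ℝ)) :
    CovariantClass Y Y (Function.swap (· + ·)) (· ≤ ·) := by
  constructor
  intro h f g hle x hx
  have := hle x hx
  show ((f + h : Y) : E →ₗ[ℝ] ℝ) x ≤ ((g + h : Y) : E →ₗ[ℝ] ℝ) x
  simp only [Submodule.coe_add, LinearMap.add_apply]
  linarith

theorem od_zero_le_iff {Y : Submodule ℝ (E →ₗ[ℝ] ℝ)} {f : Y} :
    0 ≤ f ↔ ∀ x : E, 0 ≤ x → 0 ≤ (f : E →ₗ[ℝ] ℝ) x := by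
  constructor
  · intro h x hx
    have := h x hx
    simpa using this
  · intro h x hx
    have := h x hx
    simpa using this

/-- A bundle of hypotheses saying that a preordered real module behaves like a
Riesz space as far as its positive cone is concerned. -/
structure GoodCone (E : Type*) [AddCommGroup E] [Preorder E] [Module ℝ E] : Prop where
  anti : ∀ a b : E, a ≤ b → b ≤ a → a = b
  smul_nn : ∀ (c : ℝ) (x : E), 0 ≤ c → 0 ≤ x → 0 ≤ c • x
  decomp : ∀ x : E, ∃ p n : E, 0 ≤ p ∧ 0 ≤ n ∧ x = p - n
  interp : ∀ x y z : E, 0 ≤ x → x ≤ y + z → 0 ≤ y → 0 ≤ z →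
    ∃ v, 0 ≤ v ∧ v ≤ y ∧ 0 ≤ x - v ∧ x - v ≤ z

variable [CovariantClass E E (· + ·) (· ≤ ·)]
  [CovariantClass E E (Function.swap (· + ·)) (· ≤ ·)]

theorem GoodCone.smul_mono (hg : GoodCone E) {c : ℝ} {x y : E} (hc : 0 ≤ c)
    (hxy : x ≤ y) : c • x ≤ c • y := by
  have h := hg.smul_nn c (y - x) hc (by rwa [le_sub_iff_add_le, zero_add])
  rw [smul_sub] at h
  rwa [le_sub_iff_add_le, zero_add] at h

/-- bound of a functional on a positive interval -/
theorem od_bound {F : obDual E} {w : E} (hw : 0 ≤ w) :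
    ∃ M : ℝ, ∀ x : E, 0 ≤ x → x ≤ w → |(F : E →ₗ[ℝ] ℝ) x| ≤ M := by
  obtain ⟨M, hM⟩ := F.2 w
  exact ⟨M, fun x hx hxw => hM x (le_trans (by simpa using hw) hx) hxw⟩

/-- Extension of an additive positively-homogeneous functional on the positive
cone to an element of the order dual. -/
theorem mkObDual (hg : GoodCone E) (S : E → ℝ)
    (hadd : ∀ x y : E, 0 ≤ x → 0 ≤ y → S (x + y) = S x + S y)
    (hsmul : ∀ (c : ℝ) (x : E), 0 < c → 0 ≤ x → S (c • x) = c * S x)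
    (hbdd : ∀ w : E, 0 ≤ w → ∃ M, ∀ x : E, 0 ≤ x → x ≤ w → |S x| ≤ M) :
    ∃ T : obDual E, ∀ x : E, 0 ≤ x → (T : E →ₗ[ℝ] ℝ) x = S x := by
  have hS0 : S 0 = 0 := by
    have := hadd 0 0 le_rfl le_rfl
    simp only [add_zero] at this
    linarith
  have key : ∀ p n p' n' : E, 0 ≤ p → 0 ≤ n → 0 ≤ p' → 0 ≤ n' →
      p - n = p' - n' → S p - S n = S p' - S n' := by
    intro p n p' n' hp hn hp' hn' h
    have h2 : p + n' = p' + n := by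
      rw [sub_eq_sub_iff_add_eq_add] at h
      exact h
    have := congrArg S h2
    rw [hadd p n' hp hn', hadd p' n hp' hn] at this
    linarith
  have dec : ∀ x : E, ∃ pn : E × E, 0 ≤ pn.1 ∧ 0 ≤ pn.2 ∧ x = pn.1 - pn.2 := by
    intro x
    obtain ⟨p, n, hp, hn, hx⟩ := hg.decomp x
    exact ⟨(p, n), hp, hn, hx⟩
  classical
  set P : E → ℝ := fun x => S (Classical.choose (dec x)).1 - S (Classical.choose (dec x)).2
    with hPdef
  have hP : ∀ (x p n : E), 0 ≤ p → 0 ≤ n → x = p - n → P x = S p - S n := by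
    intro x p n hp hn hx
    obtain ⟨h1, h2, h3⟩ := Classical.choose_spec (dec x)
    exact key _ _ _ _ h1 h2 hp hn (by rw [← h3, ← hx])
  have hPpos : ∀ x : E, 0 ≤ x → P x = S x := by
    intro x hx
    have := hP x x 0 hx le_rfl (by simp)
    simpa [hS0] using this
  have hPadd : ∀ x y : E, P (x + y) = P x + P y := by
    intro x y
    obtain ⟨hx1, hx2, hx3⟩ := Classical.choose_spec (dec x)
    obtain ⟨hy1, hy2, hy3⟩ := Classical.choose_spec (dec y)
    set px := (Classical.choose (dec x)).1
    set nx := (Classical.choose (dec x)).2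
    set py := (Classical.choose (dec y)).1
    set ny := (Classical.choose (dec y)).2
    have : P (x + y) = S (px + py) - S (nx + ny) := by
      refine hP _ _ _ (add_nonneg hx1 hy1) (add_nonneg hx2 hy2) ?_
      rw [hx3, hy3]; abel
    rw [this, hadd _ _ hx1 hy1, hadd _ _ hx2 hy2]
    show _ = (S px - S nx) + (S py - S ny)
    ring
  have hPsmul : ∀ (c : ℝ) (x : E), P (c • x) = c * P x := by
    intro c x
    obtain ⟨hx1, hx2, hx3⟩ := Classical.choose_spec (dec x)
    set px := (Classical.choose (dec x)).1
    set nx := (Classical.choose (dec x)).2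
    rcases lt_trichotomy c 0 with hc | hc | hc
    · have h1 : P (c • x) = S ((-c) • nx) - S ((-c) • px) := by
        refine hP _ _ _ (hg.smul_nn _ _ (by linarith) hx2)
          (hg.smul_nn _ _ (by linarith) hx1) ?_
        rw [hx3, smul_sub]
        simp [neg_smul]
        abel
      rw [h1, hsmul _ _ (by linarith) hx2, hsmul _ _ (by linarith) hx1]
      show _ = c * (S px - S nx)
      ring
    · subst hc
      simp only [zero_smul, zero_mul]
      exact hPpos 0 le_rfl ▸ hS0
    · have h1 : P (c • x) = S (c • px) - S (c • nx) := by
        refine hP _ _ _ (hg.smul_nn _ _ hc.le hx1) (hg.smul_nn _ _ hc.le hx2) ?_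
        rw [hx3, smul_sub]
      rw [h1, hsmul _ _ hc hx1, hsmul _ _ hc hx2]
      show _ = c * (S px - S nx)
      ring
  set T : E →ₗ[ℝ] ℝ :=
    { toFun := P
      map_add' := hPadd
      map_smul' := fun c x => by simpa using hPsmul c x }
  have hTmem : T ∈ obDual E := by
    intro w
    by_cases hne : ∃ x : E, -w ≤ x ∧ x ≤ w
    · obtain ⟨x₀, hx₀1, hx₀2⟩ := hne
      have hww : 0 ≤ w + w := by
        have h1 : -w ≤ w := le_trans hx₀1 hx₀2
        have h2 := add_le_add_right h1 w
        simpa using h2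
      obtain ⟨M, hM⟩ := hbdd (w + w) hww
      refine ⟨M + |P w|, fun x h1 h2 => ?_⟩
      have hxw : 0 ≤ x + w := by
        have := add_le_add_left h1 w
        simpa using this
      have hxw2 : x + w ≤ w + w := add_le_add_left h2 w
      have e1 : P (x + w) = S (x + w) := hPpos _ hxw
      have e2 : P (x + w) = P x + P w := hPadd x w
      have e3 : |S (x + w)| ≤ M := hM _ hxw hxw2
      show |P x| ≤ M + |P w|
      have : P x = S (x + w) - P w := by rw [← e1, e2]; ring
      rw [this]
      calc |S (x + w) - P w| ≤ |S (x + w)| + |P w| := abs_sub _ _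
      _ ≤ M + |P w| := by linarith
    · exact ⟨0, fun x h1 h2 => absurd ⟨x, h1, h2⟩ hne⟩
  exact ⟨⟨T, hTmem⟩, fun x hx => hPpos x hx⟩

end AuxOrder

section AuxSup

variable {E : Type*} [AddCommGroup E] [Preorder E] [Module ℝ E]
  [CovariantClass E E (· + ·) (· ≤ ·)]
  [CovariantClass E E (Function.swap (· + ·)) (· ≤ ·)]

private theorem csSup_mul_aux {c : ℝ} (hc : 0 < c) {A B : Set ℝ}
    (hne : A.Nonempty) (hb : BddAbove A) (hBA : B = (fun r => c * r) '' A) :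
    sSup B = c * sSup A := by
  subst hBA
  apply le_antisymm
  · apply csSup_le (hne.image _)
    rintro r ⟨a, ha, rfl⟩
    exact mul_le_mul_of_nonneg_left (le_csSup hb ha) hc.le
  · obtain ⟨ub, hub⟩ := hb
    have hbim : BddAbove ((fun r => c * r) '' A) := by
      refine ⟨c * ub, ?_⟩
      rintro r ⟨a, ha, rfl⟩
      exact mul_le_mul_of_nonneg_left (hub ha) hc.le
    have h : sSup A ≤ c⁻¹ * sSup ((fun r => c * r) '' A) := by
      apply csSup_le hne
      intro a ha
      have h1 : c * a ≤ sSup ((fun r => c * r) '' A) := le_csSup hbim ⟨a, ha, rfl⟩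
      have := mul_le_mul_of_nonneg_left h1 (inv_nonneg.mpr hc.le)
      calc a = c⁻¹ * (c * a) := by field_simp
      _ ≤ _ := this
    calc c * sSup A ≤ c * (c⁻¹ * sSup ((fun r => c * r) '' A)) :=
          mul_le_mul_of_nonneg_left h hc.le
    _ = sSup ((fun r => c * r) '' A) := by field_simp

/-- Riesz–Kantorovich: existence of the supremum of two elements of the
order dual, together with the key evaluation inequality. -/
theorem exists_supPair (hg : GoodCone E) (F G : obDual E) :
    ∃ H : obDual E, F ≤ H ∧ G ≤ H ∧ (∀ K, F ≤ K → G ≤ K → H ≤ K) ∧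
      (∀ x y : E, 0 ≤ y → y ≤ x →
        (F : E →ₗ[ℝ] ℝ) y + (G : E →ₗ[ℝ] ℝ) (x - y) ≤ (H : E →ₗ[ℝ] ℝ) x) := by
  classical
  set Sset : E → Set ℝ := fun x =>
    {r | ∃ y, 0 ≤ y ∧ y ≤ x ∧ r = (F : E →ₗ[ℝ] ℝ) y + (G : E →ₗ[ℝ] ℝ) (x - y)}
    with hSset
  set S : E → ℝ := fun x => sSup (Sset x) with hS
  have hmem0 : ∀ x : E, 0 ≤ x → (G : E →ₗ[ℝ] ℝ) x ∈ Sset x := by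
    intro x hx
    exact ⟨0, le_rfl, hx, by simp⟩
  have hmemF : ∀ x : E, 0 ≤ x → (F : E →ₗ[ℝ] ℝ) x ∈ Sset x := by
    intro x hx
    exact ⟨x, hx, le_rfl, by simp⟩
  have hbdd : ∀ x : E, 0 ≤ x → BddAbove (Sset x) := by
    intro x hx
    obtain ⟨Mf, hMf⟩ := od_bound (F := F) hx
    obtain ⟨Mg, hMg⟩ := od_bound (F := G) hx
    refine ⟨Mf + Mg, ?_⟩
    rintro r ⟨y, hy0, hyx, rfl⟩
    have h1 := hMf y hy0 hyx
    have h2 : 0 ≤ x - y := by rwa [le_sub_iff_add_le, zero_add]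
    have h3 : x - y ≤ x := sub_le_self x hy0
    have h4 := hMg _ h2 h3
    have := abs_le.mp h1
    have := abs_le.mp h4
    linarith [this.2]
  have hne : ∀ x : E, 0 ≤ x → (Sset x).Nonempty := fun x hx => ⟨_, hmem0 x hx⟩
  have hadd : ∀ x y : E, 0 ≤ x → 0 ≤ y → S (x + y) = S x + S y := by
    intro x y hx hy
    have hxy : 0 ≤ x + y := add_nonneg hx hy
    apply le_antisymm
    · apply csSup_le (hne _ hxy)
      rintro r ⟨v, hv0, hvxy, rfl⟩
      obtain ⟨v1, hv10, hv1x, hv20, hv2y⟩ := hg.interp v x y hv0 hvxy hx hy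
      have e1 : (F : E →ₗ[ℝ] ℝ) v1 + (G : E →ₗ[ℝ] ℝ) (x - v1) ≤ S x :=
        le_csSup (hbdd x hx) ⟨v1, hv10, hv1x, rfl⟩
      have e2 : (F : E →ₗ[ℝ] ℝ) (v - v1) + (G : E →ₗ[ℝ] ℝ) (y - (v - v1)) ≤ S y :=
        le_csSup (hbdd y hy) ⟨v - v1, hv20, hv2y, rfl⟩
      have ef : (F : E →ₗ[ℝ] ℝ) v = (F : E →ₗ[ℝ] ℝ) v1 + (F : E →ₗ[ℝ] ℝ) (v - v1) := by
        rw [← map_add]; congr 1; abel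
      have eg : (G : E →ₗ[ℝ] ℝ) (x + y - v)
          = (G : E →ₗ[ℝ] ℝ) (x - v1) + (G : E →ₗ[ℝ] ℝ) (y - (v - v1)) := by
        rw [← map_add]; congr 1; abel
      rw [ef, eg]
      linarith
    · rw [← sub_nonneg]
      have step1 : ∀ r ∈ Sset x, ∀ s ∈ Sset y, r + s ≤ S (x + y) := by
        rintro r ⟨v, hv0, hvx, rfl⟩ s ⟨u, hu0, huy, rfl⟩
        refine le_csSup (hbdd _ hxy) ⟨v + u, add_nonneg hv0 hu0, add_le_add hvx huy, ?_⟩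
        have : x + y - (v + u) = (x - v) + (y - u) := by abel
        rw [this, map_add, map_add]
        ring
      have h1 : S x + S y ≤ S (x + y) := by
        rw [← sub_nonneg]
        have : S x ≤ S (x + y) - S y := by
          apply csSup_le (hne x hx)
          intro r hr
          rw [le_sub_iff_add_le]
          have : S y ≤ S (x + y) - r := by
            apply csSup_le (hne y hy)
            intro s hs
            linarith [step1 r hr s hs]
          linarith
        linarith
      linarith
  have hsmul : ∀ (c : ℝ) (x : E), 0 < c → 0 ≤ x → S (c • x) = c * S x := by
    intro c x hc hx
    have himg : Sset (c • x) = (fun r => c * r) '' Sset x := by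
      ext r
      constructor
      · rintro ⟨y, hy0, hyx, rfl⟩
        refine ⟨(F : E →ₗ[ℝ] ℝ) (c⁻¹ • y) + (G : E →ₗ[ℝ] ℝ) (x - c⁻¹ • y),
          ⟨c⁻¹ • y, hg.smul_nn _ _ (inv_nonneg.mpr hc.le) hy0, ?_, rfl⟩, ?_⟩
        · have := hg.smul_mono (c := c⁻¹) (inv_nonneg.mpr hc.le) hyx
          rwa [smul_smul, inv_mul_cancel₀ hc.ne', one_smul] at this
        · have e1 : (F : E →ₗ[ℝ] ℝ) y = c * (F : E →ₗ[ℝ] ℝ) (c⁻¹ • y) := by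
            calc (F : E →ₗ[ℝ] ℝ) y = (F : E →ₗ[ℝ] ℝ) (c • (c⁻¹ • y)) := by
                  rw [smul_smul, mul_inv_cancel₀ hc.ne', one_smul]
            _ = c * (F : E →ₗ[ℝ] ℝ) (c⁻¹ • y) := by rw [map_smul, smul_eq_mul]
          have e2 : (G : E →ₗ[ℝ] ℝ) (c • x - y) = c * (G : E →ₗ[ℝ] ℝ) (x - c⁻¹ • y) := by
            calc (G : E →ₗ[ℝ] ℝ) (c • x - y) = (G : E →ₗ[ℝ] ℝ) (c • (x - c⁻¹ • y)) := by
                  congr 1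
                  rw [smul_sub, smul_smul, mul_inv_cancel₀ hc.ne', one_smul]
            _ = _ := by rw [map_smul, smul_eq_mul]
          rw [e1, e2]
          ring
      · rintro ⟨r', ⟨y, hy0, hyx, rfl⟩, rfl⟩
        refine ⟨c • y, hg.smul_nn _ _ hc.le hy0, hg.smul_mono hc.le hyx, ?_⟩
        have e1 : (F : E →ₗ[ℝ] ℝ) (c • y) = c * (F : E →ₗ[ℝ] ℝ) y := by
          rw [map_smul, smul_eq_mul]
        have e2 : (G : E →ₗ[ℝ] ℝ) (c • x - c • y) = c * (G : E →ₗ[ℝ] ℝ) (x - y) := by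
          rw [← smul_sub, map_smul, smul_eq_mul]
        rw [e1, e2]
        ring
    exact csSup_mul_aux hc (hne x hx) (hbdd x hx) himg
  have hbddS : ∀ w : E, 0 ≤ w → ∃ M, ∀ x : E, 0 ≤ x → x ≤ w → |S x| ≤ M := by
    intro w hw
    obtain ⟨Mf, hMf⟩ := od_bound (F := F) hw
    obtain ⟨Mg, hMg⟩ := od_bound (F := G) hw
    refine ⟨Mf + Mg + Mg, fun x hx hxw => ?_⟩
    have hub : S x ≤ Mf + Mg := by
      apply csSup_le (hne x hx)
      rintro r ⟨y, hy0, hyx, rfl⟩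
      have h1 := hMf y hy0 (le_trans hyx hxw)
      have h2 : 0 ≤ x - y := by rwa [le_sub_iff_add_le, zero_add]
      have h3 : x - y ≤ w := le_trans (sub_le_self x hy0) hxw
      have h4 := hMg _ h2 h3
      linarith [(abs_le.mp h1).2, (abs_le.mp h4).2]
    have hlb : -(Mf + Mg + Mg) ≤ S x := by
      have := le_csSup (hbdd x hx) (hmem0 x hx)
      have h4 := hMg _ hx hxw
      have h1 : 0 ≤ Mf := le_trans (abs_nonneg _) (hMf 0 le_rfl hw)
      linarith [(abs_le.mp h4).1]
    have h5 : 0 ≤ Mg := le_trans (abs_nonneg _) (hMg 0 le_rfl hw)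
    rw [abs_le]
    constructor <;> linarith
  obtain ⟨T, hT⟩ := mkObDual hg S hadd hsmul hbddS
  refine ⟨T, ?_, ?_, ?_, ?_⟩
  · intro x hx
    rw [hT x hx]
    exact le_csSup (hbdd x hx) (hmemF x hx)
  · intro x hx
    rw [hT x hx]
    exact le_csSup (hbdd x hx) (hmem0 x hx)
  · intro K hFK hGK x hx
    rw [hT x hx]
    apply csSup_le (hne x hx)
    rintro r ⟨y, hy0, hyx, rfl⟩
    have h2 : 0 ≤ x - y := by rwa [le_sub_iff_add_le, zero_add]
    have e1 := hFK y hy0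
    have e2 := hGK _ h2
    have : (K : E →ₗ[ℝ] ℝ) x = (K : E →ₗ[ℝ] ℝ) y + (K : E →ₗ[ℝ] ℝ) (x - y) := by
      rw [← map_add]
      congr 1
      abel
    rw [this]
    exact add_le_add e1 e2
  · intro x y hy0 hyx
    have hx : 0 ≤ x := le_trans hy0 hyx
    rw [hT x hx]
    exact le_csSup (hbdd x hx) ⟨y, hy0, hyx, rfl⟩

end AuxSup

section AuxLattice

variable {E : Type*} [AddCommGroup E] [Preorder E] [Module ℝ E]
  [CovariantClass E E (· + ·) (· ≤ ·)]
  [CovariantClass E E (Function.swap (· + ·)) (· ≤ ·)]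

/-- The supremum of two elements of the order dual. -/
noncomputable def sup2 (hg : GoodCone E) (F G : obDual E) : obDual E :=
  (exists_supPair hg F G).choose

theorem le_sup2_left (hg : GoodCone E) (F G : obDual E) : F ≤ sup2 hg F G :=
  (exists_supPair hg F G).choose_spec.1

theorem le_sup2_right (hg : GoodCone E) (F G : obDual E) : G ≤ sup2 hg F G :=
  (exists_supPair hg F G).choose_spec.2.1

theorem sup2_le (hg : GoodCone E) {F G K : obDual E} (h1 : F ≤ K) (h2 : G ≤ K) :
    sup2 hg F G ≤ K :=
  (exists_supPair hg F G).choose_spec.2.2.1 K h1 h2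

theorem sup2_ge_elem (hg : GoodCone E) (F G : obDual E) {x y : E} (hy0 : 0 ≤ y)
    (hyx : y ≤ x) :
    (F : E →ₗ[ℝ] ℝ) y + (G : E →ₗ[ℝ] ℝ) (x - y) ≤ (sup2 hg F G : E →ₗ[ℝ] ℝ) x :=
  (exists_supPair hg F G).choose_spec.2.2.2 x y hy0 hyx

/-- The infimum of two elements of the order dual. -/
noncomputable def inf2 (hg : GoodCone E) (F G : obDual E) : obDual E :=
  F + G - sup2 hg F G

theorem inf2_apply (hg : GoodCone E) (F G : obDual E) (x : E) :
    (inf2 hg F G : E →ₗ[ℝ] ℝ) x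
      = (F : E →ₗ[ℝ] ℝ) x + (G : E →ₗ[ℝ] ℝ) x - (sup2 hg F G : E →ₗ[ℝ] ℝ) x := by
  simp [inf2]

theorem inf2_le_left (hg : GoodCone E) (F G : obDual E) : inf2 hg F G ≤ F := by
  intro x hx
  have h := le_sup2_right hg F G x hx
  rw [inf2_apply]
  linarith

theorem inf2_le_right (hg : GoodCone E) (F G : obDual E) : inf2 hg F G ≤ G := by
  intro x hx
  have h := le_sup2_left hg F G x hx
  rw [inf2_apply]
  linarith

theorem le_inf2 (hg : GoodCone E) {F G K : obDual E} (h1 : K ≤ F) (h2 : K ≤ G) :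
    K ≤ inf2 hg F G := by
  have hs : sup2 hg F G ≤ F + G - K := by
    apply sup2_le hg
    · intro x hx
      have := h2 x hx
      show _ ≤ ((F + G - K : obDual E) : E →ₗ[ℝ] ℝ) x
      simp only [AddSubgroupClass.coe_sub, Submodule.coe_add, LinearMap.sub_apply,
        LinearMap.add_apply]
      linarith
    · intro x hx
      have := h1 x hx
      show _ ≤ ((F + G - K : obDual E) : E →ₗ[ℝ] ℝ) x
      simp only [AddSubgroupClass.coe_sub, Submodule.coe_add, LinearMap.sub_apply,
        LinearMap.add_apply]
      linarith
  intro x hx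
  have := hs x hx
  simp only [AddSubgroupClass.coe_sub, Submodule.coe_add, LinearMap.sub_apply,
    LinearMap.add_apply] at this
  rw [inf2_apply]
  linarith

theorem inf2_mono (hg : GoodCone E) {F F' G G' : obDual E} (h1 : F ≤ F')
    (h2 : G ≤ G') : inf2 hg F G ≤ inf2 hg F' G' :=
  le_inf2 hg ((inf2_le_left hg F G).trans h1) ((inf2_le_right hg F G).trans h2)

theorem inf2_comm_le (hg : GoodCone E) (F G : obDual E) :
    inf2 hg F G ≤ inf2 hg G F :=
  le_inf2 hg (inf2_le_right hg F G) (inf2_le_left hg F G)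

theorem sup2_nonneg_of_right (hg : GoodCone E) (F : obDual E) :
    (0 : obDual E) ≤ sup2 hg F 0 :=
  le_sup2_right hg F 0

theorem abs2_nonneg (hg : GoodCone E) (F : obDual E) :
    (0 : obDual E) ≤ sup2 hg F (-F) := by
  intro x hx
  have h1 := le_sup2_left hg F (-F) x hx
  have h2 := le_sup2_right hg F (-F) x hx
  simp only [NegMemClass.coe_neg, LinearMap.neg_apply] at h2
  simp only [ZeroMemClass.coe_zero, LinearMap.zero_apply]
  linarith

theorem inf2_nonneg (hg : GoodCone E) {F G : obDual E} (h1 : 0 ≤ F) (h2 : 0 ≤ G) :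
    0 ≤ inf2 hg F G := le_inf2 hg h1 h2

/-- Infinite distributivity, in the one-sided form we need. -/
theorem inf2_distrib_le (hg : GoodCone E) {A : Set (obDual E)} {s c m : obDual E}
    (hub : ∀ a ∈ A, a ≤ s) (hlub : ∀ K, (∀ a ∈ A, a ≤ K) → s ≤ K)
    (hm : ∀ a ∈ A, inf2 hg a c ≤ m) : inf2 hg s c ≤ m := by
  set P := sup2 hg (s - c) 0 with hP
  have hP0 : (0 : obDual E) ≤ P := le_sup2_right hg _ _
  have step1 : ∀ a ∈ A, a ≤ m + P := by
    intro a ha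
    have h1 : a - P ≤ inf2 hg a c := by
      apply le_inf2 hg
      · intro x hx
        have := hP0 x hx
        simp only [ZeroMemClass.coe_zero, LinearMap.zero_apply] at this
        show ((a - P : obDual E) : E →ₗ[ℝ] ℝ) x ≤ _
        simp only [AddSubgroupClass.coe_sub, LinearMap.sub_apply]
        linarith
      · intro x hx
        have h2 := hub a ha x hx
        have h3 := le_sup2_left hg (s - c) 0 x hx
        simp only [AddSubgroupClass.coe_sub, LinearMap.sub_apply] at h3
        show ((a - P : obDual E) : E →ₗ[ℝ] ℝ) x ≤ _
        simp only [AddSubgroupClass.coe_sub, LinearMap.sub_apply]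
        linarith
    have h4 := h1.trans (hm a ha)
    intro x hx
    have := h4 x hx
    simp only [AddSubgroupClass.coe_sub, LinearMap.sub_apply] at this
    show _ ≤ ((m + P : obDual E) : E →ₗ[ℝ] ℝ) x
    simp only [Submodule.coe_add, LinearMap.add_apply]
    linarith
  have step2 : s ≤ m + P := hlub _ step1
  have step3 : P ≤ sup2 hg s c - c := by
    apply sup2_le hg
    · intro x hx
      have := le_sup2_left hg s c x hx
      show ((s - c : obDual E) : E →ₗ[ℝ] ℝ) x ≤ ((sup2 hg s c - c : obDual E) : E →ₗ[ℝ] ℝ) x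
      simp only [AddSubgroupClass.coe_sub, LinearMap.sub_apply]
      linarith
    · intro x hx
      have := le_sup2_right hg s c x hx
      show ((0 : obDual E) : E →ₗ[ℝ] ℝ) x ≤ ((sup2 hg s c - c : obDual E) : E →ₗ[ℝ] ℝ) x
      simp only [AddSubgroupClass.coe_sub, LinearMap.sub_apply, ZeroMemClass.coe_zero,
        LinearMap.zero_apply]
      linarith
  intro x hx
  have e2 := step2 x hx
  have e3 := step3 x hx
  simp only [Submodule.coe_add, AddSubgroupClass.coe_sub, LinearMap.add_apply,
    LinearMap.sub_apply] at e2 e3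
  rw [inf2_apply]
  linarith

/-- Supremum of a nonempty directed bounded family in the order dual. -/
theorem exists_dirSup (hg : GoodCone E) (A : Set (obDual E)) (F₀ : obDual E)
    (hF₀ : F₀ ∈ A) (hdir : ∀ a ∈ A, ∀ b ∈ A, ∃ c ∈ A, a ≤ c ∧ b ≤ c)
    (U : obDual E) (hU : ∀ a ∈ A, a ≤ U) :
    ∃ s : obDual E, (∀ a ∈ A, a ≤ s) ∧ ∀ K, (∀ a ∈ A, a ≤ K) → s ≤ K := by
  classical
  set Sset : E → Set ℝ := fun x => (fun a : obDual E => (a : E →ₗ[ℝ] ℝ) x) '' A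
    with hSset
  set S : E → ℝ := fun x => sSup (Sset x) with hS
  have hne : ∀ x : E, (Sset x).Nonempty := fun x => ⟨_, F₀, hF₀, rfl⟩
  have hbdd : ∀ x : E, 0 ≤ x → BddAbove (Sset x) := by
    intro x hx
    refine ⟨(U : E →ₗ[ℝ] ℝ) x, ?_⟩
    rintro r ⟨a, ha, rfl⟩
    exact hU a ha x hx
  have hadd : ∀ x y : E, 0 ≤ x → 0 ≤ y → S (x + y) = S x + S y := by
    intro x y hx hy
    apply le_antisymm
    · apply csSup_le (hne _)
      rintro r ⟨a, ha, rfl⟩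
      show (a : E →ₗ[ℝ] ℝ) (x + y) ≤ _
      rw [map_add]
      exact add_le_add (le_csSup (hbdd x hx) ⟨a, ha, rfl⟩)
        (le_csSup (hbdd y hy) ⟨a, ha, rfl⟩)
    · rw [← sub_nonneg]
      have h1 : S x ≤ S (x + y) - S y := by
        apply csSup_le (hne x)
        rintro r ⟨a, ha, rfl⟩
        show (a : E →ₗ[ℝ] ℝ) x ≤ _
        rw [le_sub_iff_add_le]
        have : S y ≤ S (x + y) - (a : E →ₗ[ℝ] ℝ) x := by
          apply csSup_le (hne y)
          rintro r' ⟨b, hb, rfl⟩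
          show (b : E →ₗ[ℝ] ℝ) y ≤ _
          obtain ⟨c, hc, hac, hbc⟩ := hdir a ha b hb
          have e1 := hac x hx
          have e2 := hbc y hy
          have e3 : (c : E →ₗ[ℝ] ℝ) (x + y) ≤ S (x + y) :=
            le_csSup (hbdd _ (add_nonneg hx hy)) ⟨c, hc, rfl⟩
          rw [map_add] at e3
          linarith
        linarith
      linarith
  have hsmul : ∀ (c : ℝ) (x : E), 0 < c → 0 ≤ x → S (c • x) = c * S x := by
    intro c x hc hx
    have himg : Sset (c • x) = (fun r => c * r) '' Sset x := by
      rw [hSset]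
      simp only [Set.image_image]
      apply Set.image_congr
      intro a _
      rw [map_smul, smul_eq_mul]
    exact csSup_mul_aux hc (hne x) (hbdd x hx) himg
  have hbddS : ∀ w : E, 0 ≤ w → ∃ M, ∀ x : E, 0 ≤ x → x ≤ w → |S x| ≤ M := by
    intro w hw
    obtain ⟨M₀, hM₀⟩ := od_bound (F := F₀) hw
    obtain ⟨MU, hMU⟩ := od_bound (F := U) hw
    refine ⟨M₀ + MU, fun x hx hxw => ?_⟩
    have h1 : S x ≤ MU := by
      apply csSup_le (hne x)
      rintro r ⟨a, ha, rfl⟩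
      show (a : E →ₗ[ℝ] ℝ) x ≤ _
      exact le_trans (hU a ha x hx) (abs_le.mp (hMU x hx hxw)).2
    have h2 : -M₀ ≤ S x := by
      have := le_csSup (hbdd x hx) ⟨F₀, hF₀, rfl⟩
      have h3 := (abs_le.mp (hM₀ x hx hxw)).1
      linarith
    have h4 : 0 ≤ M₀ := le_trans (abs_nonneg _) (hM₀ 0 le_rfl hw)
    have h5 : 0 ≤ MU := le_trans (abs_nonneg _) (hMU 0 le_rfl hw)
    rw [abs_le]; constructor <;> linarith
  obtain ⟨T, hT⟩ := mkObDual hg S hadd hsmul hbddS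
  refine ⟨T, ?_, ?_⟩
  · intro a ha x hx
    rw [hT x hx]
    exact le_csSup (hbdd x hx) ⟨a, ha, rfl⟩
  · intro K hK x hx
    rw [hT x hx]
    apply csSup_le (hne x)
    rintro r ⟨a, ha, rfl⟩
    exact hK a ha x hx

/-- Finite suprema generated by a set. -/
inductive FinSups (hg : GoodCone E) (A : Set (obDual E)) : obDual E → Prop
  | base {a : obDual E} : a ∈ A → FinSups hg A a
  | node {a b : obDual E} : FinSups hg A a → FinSups hg A b → FinSups hg A (sup2 hg a b)

theorem exists_finsups_sup (hg : GoodCone E) (A : Set (obDual E)) (F₀ : obDual E)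
    (hF₀ : F₀ ∈ A) (U : obDual E) (hU : ∀ a ∈ A, a ≤ U) :
    ∃ p : obDual E, (∀ a, FinSups hg A a → a ≤ p) ∧
      ∀ K, (∀ a, FinSups hg A a → a ≤ K) → p ≤ K := by
  have hbdd : ∀ a, FinSups hg A a → a ≤ U := by
    intro a ha
    induction ha with
    | base h => exact hU _ h
    | node _ _ ih1 ih2 => exact sup2_le hg ih1 ih2
  have hdir : ∀ a ∈ {b | FinSups hg A b}, ∀ b ∈ {b | FinSups hg A b},
      ∃ c ∈ {b | FinSups hg A b}, a ≤ c ∧ b ≤ c := by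
    intro a ha b hb
    exact ⟨sup2 hg a b, FinSups.node ha hb, le_sup2_left hg a b, le_sup2_right hg a b⟩
  obtain ⟨s, h1, h2⟩ := exists_dirSup hg {b | FinSups hg A b} F₀ (FinSups.base hF₀)
    hdir U (fun a ha => hbdd a ha)
  exact ⟨s, fun a ha => h1 a ha, fun K hK => h2 K (fun a ha => hK a ha)⟩

end AuxLattice

section AuxVL

variable {X : Type*} [Lattice X] [AddCommGroup X]
  [CovariantClass X X (· + ·) (· ≤ ·)] [Module ℝ X] [PosSMulMono ℝ X]

theorem xsmul_mono {c : ℝ} {a b : X} (hc : 0 ≤ c) (h : a ≤ b) : c • a ≤ c • b :=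
  smul_le_smul_of_nonneg_left h hc

theorem xsmul_nonneg {c : ℝ} {a : X} (hc : 0 ≤ c) (h : 0 ≤ a) : 0 ≤ c • a := by
  have := xsmul_mono (a := (0 : X)) hc h
  rwa [smul_zero] at this

theorem smul_posPart {c : ℝ} (hc : 0 < c) (z : X) : (c • z)⁺ = c • z⁺ := by
  apply le_antisymm
  · have h1 : (c • z) ⊔ 0 ≤ c • (z ⊔ 0) := by
      apply sup_le
      · exact xsmul_mono hc.le le_sup_left
      · have := xsmul_mono (a := (0 : X)) (b := z ⊔ 0) hc.le le_sup_right
        rwa [smul_zero] at this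
    exact h1
  · have h2 : z ⊔ 0 ≤ c⁻¹ • ((c • z) ⊔ 0) := by
      apply sup_le
      · have := xsmul_mono (c := c⁻¹) (inv_nonneg.mpr hc.le)
          (le_sup_left : c • z ≤ (c • z) ⊔ 0)
        rwa [smul_smul, inv_mul_cancel₀ hc.ne', one_smul] at this
      · have := xsmul_mono (c := c⁻¹) (a := (0:X)) (inv_nonneg.mpr hc.le)
          (le_sup_right : (0:X) ≤ (c • z) ⊔ 0)
        rwa [smul_zero] at this
    have := xsmul_mono hc.le h2
    rwa [smul_smul, mul_inv_cancel₀ hc.ne', one_smul] at this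

theorem gcX : GoodCone X where
  anti := fun a b h1 h2 => le_antisymm h1 h2
  smul_nn := fun c x hc hx => xsmul_nonneg hc hx
  decomp := fun x => ⟨x⁺, x⁻, posPart_nonneg x, negPart_nonneg x,
    (posPart_sub_negPart x).symm⟩
  interp := by
    intro x y z hx hxyz hy hz
    refine ⟨x ⊓ y, le_inf hx hy, inf_le_right, ?_, ?_⟩
    · rw [sub_nonneg]; exact inf_le_left
    · rw [sub_le_comm]
      exact le_inf (sub_le_self x hz) (sub_le_iff_le_add.mpr hxyz)

theorem od_pos_apply {f : obDual X} (hf : 0 ≤ f) {v : X} (hv : 0 ≤ v) :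
    0 ≤ (f : X →ₗ[ℝ] ℝ) v := by
  have := hf v hv; simpa using this

theorem od_mono_apply {f : obDual X} (hf : 0 ≤ f) {v w : X} (h : v ≤ w) :
    (f : X →ₗ[ℝ] ℝ) v ≤ (f : X →ₗ[ℝ] ℝ) w := by
  have := od_pos_apply hf (v := w - v) (by rwa [sub_nonneg])
  rw [map_sub] at this
  linarith

/-- Hahn–Banach: a positive functional attains `f (z⁺)` on `[0, f]`. -/
theorem exists_hb (f : obDual X) (hf : 0 ≤ f) (z : X) :
    ∃ g : obDual X, 0 ≤ g ∧ g ≤ f ∧ (g : X →ₗ[ℝ] ℝ) z = (f : X →ₗ[ℝ] ℝ) (z⁺) := by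
  classical
  by_cases hz : z = 0
  · refine ⟨0, le_rfl, hf, ?_⟩
    subst hz
    simp
  · set N : X → ℝ := fun v => (f : X →ₗ[ℝ] ℝ) (v⁺) with hN
    have N_hom : ∀ c : ℝ, 0 < c → ∀ v : X, N (c • v) = c * N v := by
      intro c hc v
      rw [hN]
      simp only
      rw [smul_posPart hc, map_smul, smul_eq_mul]
    have N_add : ∀ v w : X, N (v + w) ≤ N v + N w := by
      intro v w
      have h1 : (v + w)⁺ ≤ v⁺ + w⁺ := by
        apply sup_le
        · exact add_le_add le_sup_left le_sup_left
        · exact add_nonneg (posPart_nonneg v) (posPart_nonneg w)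
      have := od_mono_apply hf h1
      rw [map_add] at this
      exact this
    set pm := LinearPMap.mkSpanSingleton (K := ℝ) (L := ℝ) (σ := RingHom.id ℝ) z ((f : X →ₗ[ℝ] ℝ) (z⁺)) hz with hpm
    have hzmem : z ∈ pm.domain := Submodule.mem_span_singleton_self z
    have hpmz : pm ⟨z, hzmem⟩ = (f : X →ₗ[ℝ] ℝ) (z⁺) := LinearPMap.mkSpanSingleton_apply ℝ ℝ hz _
    have hNpm : ∀ v : pm.domain, pm v ≤ N (v : X) := by
      intro v
      obtain ⟨c, hc⟩ := Submodule.mem_span_singleton.mp v.2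
      have hveq : v = c • (⟨z, hzmem⟩ : pm.domain) := by
        apply Subtype.ext
        exact hc.symm
      have hval : pm v = c * (f : X →ₗ[ℝ] ℝ) (z⁺) := by
        rw [hveq, pm.map_smul, hpmz, smul_eq_mul]
      rw [hval]
      have hcoe : (v : X) = c • z := hc.symm
      rw [hcoe]
      rcases lt_trichotomy c 0 with h | h | h
      · have h1 : c * (f : X →ₗ[ℝ] ℝ) (z⁺) ≤ 0 :=
          mul_nonpos_of_nonpos_of_nonneg h.le (od_pos_apply hf (posPart_nonneg z))
        have h2 : 0 ≤ N (c • z) := od_pos_apply hf (posPart_nonneg _)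
        linarith
      · subst h
        simp only [zero_smul, zero_mul, hN]
        have : ((0 : X))⁺ = 0 := by simp
        rw [this, map_zero]
      · rw [N_hom c h z]
    obtain ⟨g₀, hagree, hle⟩ := exists_extension_of_le_sublinear pm N N_hom N_add hNpm
    have gpos : ∀ v : X, 0 ≤ v → 0 ≤ g₀ v := by
      intro v hv
      have h1 := hle (-v)
      have h2 : (-v)⁺ = 0 := by
        show (-v) ⊔ 0 = 0
        apply sup_eq_right.mpr
        have := add_le_add_left hv (-v)
        simpa using this
      rw [hN] at h1
      simp only at h1
      rw [h2, map_zero, map_neg] at h1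
      linarith
    have gle : ∀ v : X, 0 ≤ v → g₀ v ≤ (f : X →ₗ[ℝ] ℝ) v := by
      intro v hv
      have h1 := hle v
      have h2 : v⁺ = v := by
        show v ⊔ 0 = v
        exact sup_eq_left.mpr hv
      rw [hN] at h1
      simp only at h1
      rwa [h2] at h1
    have gmem : g₀ ∈ obDual X := by
      intro w
      refine ⟨(f : X →ₗ[ℝ] ℝ) (w⁺ + w⁺), fun x h1 h2 => ?_⟩
      have hxp : x⁺ ≤ w⁺ := sup_le_sup_right h2 0
      have hxn : x⁻ ≤ w⁺ := by
        show (-x) ⊔ 0 ≤ w ⊔ 0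
        have : -x ≤ w := by
          have := add_le_add_left h1 (w - x)
          calc -x = -w + (w - x) := by abel
          _ ≤ x + (w - x) := this
          _ = w := by abel
        exact sup_le_sup_right this 0
      have e1 : g₀ x = g₀ (x⁺) - g₀ (x⁻) := by
        rw [← map_sub]
        congr 1
        exact (posPart_sub_negPart x).symm
      have b1 : 0 ≤ g₀ (x⁺) := gpos _ (posPart_nonneg x)
      have b2 : 0 ≤ g₀ (x⁻) := gpos _ (negPart_nonneg x)
      have b3 : g₀ (x⁺) ≤ (f : X →ₗ[ℝ] ℝ) (x⁺) := gle _ (posPart_nonneg x)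
      have b4 : g₀ (x⁻) ≤ (f : X →ₗ[ℝ] ℝ) (x⁻) := gle _ (negPart_nonneg x)
      have b5 : (f : X →ₗ[ℝ] ℝ) (x⁺) ≤ (f : X →ₗ[ℝ] ℝ) (w⁺) := od_mono_apply hf hxp
      have b6 : (f : X →ₗ[ℝ] ℝ) (x⁻) ≤ (f : X →ₗ[ℝ] ℝ) (w⁺) := od_mono_apply hf hxn
      rw [e1, map_add]
      rw [abs_le]
      constructor <;> linarith
    refine ⟨⟨g₀, gmem⟩, ?_, ?_, ?_⟩
    · exact od_zero_le_iff.mpr gpos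
    · intro v hv
      exact gle v hv
    · have := hagree ⟨z, hzmem⟩
      rw [hpmz] at this
      exact this

end AuxVL

section AuxHat

variable {X : Type*} [Lattice X] [AddCommGroup X]
  [CovariantClass X X (· + ·) (· ≤ ·)] [Module ℝ X] [PosSMulMono ℝ X]

theorem gcY : GoodCone (↥(obDual X)) where
  anti := by
    intro f g h1 h2
    apply Subtype.ext
    apply LinearMap.ext
    intro v
    have e1 : ∀ w : X, 0 ≤ w → (f : X →ₗ[ℝ] ℝ) w = (g : X →ₗ[ℝ] ℝ) w :=
      fun w hw => le_antisymm (h1 w hw) (h2 w hw)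
    have d := posPart_sub_negPart v
    calc (f : X →ₗ[ℝ] ℝ) v = (f : X →ₗ[ℝ] ℝ) (v⁺) - (f : X →ₗ[ℝ] ℝ) (v⁻) := by
          rw [← map_sub, d]
    _ = (g : X →ₗ[ℝ] ℝ) (v⁺) - (g : X →ₗ[ℝ] ℝ) (v⁻) := by
          rw [e1 _ (posPart_nonneg v), e1 _ (negPart_nonneg v)]
    _ = (g : X →ₗ[ℝ] ℝ) v := by rw [← map_sub, d]
  smul_nn := by
    intro c f hc hf v hv
    have h := hf v hv
    simp only [ZeroMemClass.coe_zero, LinearMap.zero_apply] at h ⊢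
    show (0:ℝ) ≤ ((c • f : obDual X) : X →ₗ[ℝ] ℝ) v
    rw [Submodule.coe_smul, LinearMap.smul_apply, smul_eq_mul]
    exact mul_nonneg hc h
  decomp := by
    intro f
    refine ⟨sup2 gcX f 0, sup2 gcX f 0 - f, le_sup2_right gcX f 0, ?_, ?_⟩
    · rw [sub_nonneg]; exact le_sup2_left gcX f 0
    · exact (sub_sub_cancel (sup2 gcX f 0) f).symm
  interp := by
    intro x y z hx hxyz hy hz
    refine ⟨inf2 gcX x y, le_inf2 gcX hx hy, inf2_le_right gcX x y, ?_, ?_⟩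
    · rw [sub_nonneg]; exact inf2_le_left gcX x y
    · rw [sub_le_comm]
      exact le_inf2 gcX (sub_le_self x hz) (sub_le_iff_le_add.mpr hxyz)

instance instBidualCov :
    CovariantClass ↥(obDual ↥(obDual X)) ↥(obDual ↥(obDual X)) (· + ·) (· ≤ ·) :=
  instSubCov (E := ↥(obDual X)) (obDual ↥(obDual X))

instance instBidualCovSwap :
    CovariantClass ↥(obDual ↥(obDual X)) ↥(obDual ↥(obDual X)) (Function.swap (· + ·)) (· ≤ ·) :=
  instSubCovSwap (E := ↥(obDual X)) (obDual ↥(obDual X))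

theorem hat_apply (x : X) (f : obDual X) :
    ((hatEl X (obDual X) x : obDual ↥(obDual X)) : ↥(obDual X) →ₗ[ℝ] ℝ) f
      = (f : X →ₗ[ℝ] ℝ) x := rfl

theorem hat_mono {a b : X} (h : a ≤ b) :
    hatEl X (obDual X) a ≤ hatEl X (obDual X) b := by
  intro f hf
  have hf' : (0 : obDual X) ≤ f := hf
  show (f : X →ₗ[ℝ] ℝ) a ≤ (f : X →ₗ[ℝ] ℝ) b
  exact od_mono_apply hf' h

theorem hat_sub (a b : X) :
    hatEl X (obDual X) (a - b) = hatEl X (obDual X) a - hatEl X (obDual X) b := by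
  apply Subtype.ext
  apply LinearMap.ext
  intro f
  simp only [AddSubgroupClass.coe_sub, LinearMap.sub_apply]
  show (f : X →ₗ[ℝ] ℝ) (a - b) = (f : X →ₗ[ℝ] ℝ) a - (f : X →ₗ[ℝ] ℝ) b
  exact map_sub _ _ _

theorem hat_neg (a : X) :
    hatEl X (obDual X) (-a) = -(hatEl X (obDual X) a) := by
  apply Subtype.ext
  apply LinearMap.ext
  intro f
  simp only [NegMemClass.coe_neg, LinearMap.neg_apply]
  show (f : X →ₗ[ℝ] ℝ) (-a) = -(f : X →ₗ[ℝ] ℝ) a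
  exact map_neg _ _

theorem inf_eq_sub_posPart (a u : X) : a ⊓ u = a - (a - u)⁺ := by
  have hsup : a ⊔ u = u + (a - u)⁺ := by
    show a ⊔ u = u + ((a - u) ⊔ 0)
    rw [add_sup]
    have h1 : u + (a - u) = a := by abel
    rw [h1, add_zero]
  have h := inf_add_sup a u
  rw [hsup] at h
  have h2 := eq_sub_of_add_eq h
  rw [h2]
  abel

/-- The canonical embedding is an `inf`-homomorphism (one inequality). -/
theorem hat_inf_le (a u : X) :
    inf2 (gcY (X := X)) (hatEl X (obDual X) a) (hatEl X (obDual X) u)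
      ≤ hatEl X (obDual X) (a ⊓ u) := by
  intro f hf
  rw [inf2_apply]
  have hf' : (0 : obDual X) ≤ f := hf
  obtain ⟨g, hg0, hgf, hgz⟩ := exists_hb f hf' (a - u)
  have helem := sup2_ge_elem (gcY (X := X)) (hatEl X (obDual X) a) (hatEl X (obDual X) u)
    (x := f) (y := g) hg0 hgf
  have e1 : ((hatEl X (obDual X) a : obDual ↥(obDual X)) : ↥(obDual X) →ₗ[ℝ] ℝ) g
      = (g : X →ₗ[ℝ] ℝ) a := rfl
  have e2 : ((hatEl X (obDual X) u : obDual ↥(obDual X)) : ↥(obDual X) →ₗ[ℝ] ℝ) (f - g)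
      = (f : X →ₗ[ℝ] ℝ) u - (g : X →ₗ[ℝ] ℝ) u := by
    show ((f - g : obDual X) : X →ₗ[ℝ] ℝ) u = _
    simp only [AddSubgroupClass.coe_sub, LinearMap.sub_apply]
  rw [e1, e2] at helem
  have e3 : (f : X →ₗ[ℝ] ℝ) (a ⊓ u) = (f : X →ₗ[ℝ] ℝ) a - (f : X →ₗ[ℝ] ℝ) ((a - u)⁺) := by
    rw [inf_eq_sub_posPart a u, map_sub]
  have e4 : (g : X →ₗ[ℝ] ℝ) a - (g : X →ₗ[ℝ] ℝ) u = (f : X →ₗ[ℝ] ℝ) ((a - u)⁺) := by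
    rw [← map_sub]
    exact hgz
  show (f : X →ₗ[ℝ] ℝ) a + (f : X →ₗ[ℝ] ℝ) u - _ ≤ (f : X →ₗ[ℝ] ℝ) (a ⊓ u)
  rw [e3]
  linarith

end AuxHat

/-- If the canonical image of `X` is regular in `X~~` and `x_α` bbuo-converges
to `x`, then `x̂_α` order converges to `x̂` in `X~~`. -/
theorem statement8 {X : Type u} [Lattice X] [AddCommGroup X]
    [CovariantClass X X (· + ·) (· ≤ ·)] [Module ℝ X] [PosSMulMono ℝ X]
    (harch : IsArch X)
    (hsep : SepPoints X) (hreg : HatRegular X)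
    {ι : Type v} [Preorder ι] [Nonempty ι] [IsDirected ι (· ≤ ·)]
    (x : ι → X) (l : X) (h : bbuoConvTo x l) :
    OConvTo (fun α => hatEl X (obDual X) (x α)) (hatEl X (obDual X) l) := by
  classical
  obtain ⟨huo, b, t, α₁, hbt⟩ := h
  have gY : GoodCone (↥(obDual X)) := gcY (X := X)
  set hat : X → ↥(obDual ↥(obDual X)) := hatEl X (obDual X) with hhat
  have hat_sub' : ∀ a c : X, hat (a - c) = hat a - hat c := fun a c => hat_sub a c
  have hat_neg' : ∀ a : X, hat (-a) = -(hat a) := fun a => hat_neg a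
  set w : ↥(obDual ↥(obDual X)) := sup2 gY (sup2 gY (t - hat l) (hat l - b)) 0 with hwdef
  have hw0 : 0 ≤ w := le_sup2_right gY _ _
  set A : ι → ↥(obDual ↥(obDual X)) :=
    fun β => sup2 gY (hat (x β - l)) (-(hat (x β - l))) with hAdef
  have hA0 : ∀ β, 0 ≤ A β := fun β => abs2_nonneg gY _
  have hAyle : ∀ β, hat (x β - l) ≤ A β := fun β => le_sup2_left gY _ _
  have hAyle' : ∀ β, -(hat (x β - l)) ≤ A β := fun β => le_sup2_right gY _ _
  have hAw : ∀ β, α₁ ≤ β → A β ≤ w := by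
    intro β hβ
    obtain ⟨h1, h2⟩ := hbt β hβ
    apply sup2_le gY
    · rw [hat_sub']
      refine le_trans (sub_le_sub_right h2 _)
        (le_trans (le_sup2_left gY _ _) (le_sup2_left gY _ 0))
    · rw [hat_sub', neg_sub (hat (x β)) (hat l)]
      refine le_trans (sub_le_sub_left h1 _)
        (le_trans (le_sup2_right gY _ _) (le_sup2_left gY _ 0))
  set z : ι → ↥(obDual ↥(obDual X)) := fun β => inf2 gY (A β) w with hzdef
  have hz0 : ∀ β, 0 ≤ z β := fun β => le_inf2 gY (hA0 β) hw0
  have hzw : ∀ β, z β ≤ w := fun β => inf2_le_right gY _ _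
  have hzA : ∀ β, z β ≤ A β := fun β => inf2_le_left gY _ _
  have hAz : ∀ β, α₁ ≤ β → A β ≤ z β := fun β hβ => le_inf2 gY le_rfl (hAw β hβ)
  have hAhabs : ∀ β, A β ≤ hat |x β - l| := by
    intro β
    apply sup2_le gY
    · exact hat_mono (le_sup_left : x β - l ≤ (x β - l) ⊔ -(x β - l))
    · rw [← hat_neg']
      exact hat_mono (le_sup_right : -(x β - l) ≤ (x β - l) ⊔ -(x β - l))
  set D : Set (↥(obDual ↥(obDual X))) :=
    {d | 0 ≤ d ∧ ∃ α₀ : ι, ∀ β, α₀ ≤ β → z β ≤ d} with hDdef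
  have hp : ∀ α₀ : ι, ∃ p,
      (∀ a, FinSups gY {e | ∃ β, α₀ ≤ β ∧ e = z β} a → a ≤ p) ∧
      (∀ K, (∀ a, FinSups gY {e | ∃ β, α₀ ≤ β ∧ e = z β} a → a ≤ K) → p ≤ K) := by
    intro α₀
    refine exists_finsups_sup gY {e | ∃ β, α₀ ≤ β ∧ e = z β} (z α₀) ⟨α₀, le_rfl, rfl⟩ w ?_
    rintro a ⟨β, hβ, rfl⟩
    exact hzw β
  have hpD : ∀ α₀ : ι, ∀ p,
      (∀ a, FinSups gY {e | ∃ β, α₀ ≤ β ∧ e = z β} a → a ≤ p) → p ∈ D := by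
    intro α₀ p hp1
    refine ⟨le_trans (hz0 α₀) (hp1 _ (FinSups.base ⟨α₀, le_rfl, rfl⟩)),
      α₀, fun β hβ => hp1 _ (FinSups.base ⟨β, hβ, rfl⟩)⟩
  refine ⟨D, ?_, ?_, ?_, ?_⟩
  · exact ⟨w, hw0, Classical.arbitrary ι, fun β _ => hzw β⟩
  · rintro d1 ⟨hd1, αa, h1⟩ d2 ⟨hd2, αb, h2⟩
    obtain ⟨α₃, hh1, hh2⟩ := exists_ge_ge αa αb
    exact ⟨inf2 gY d1 d2,
      ⟨inf2_nonneg gY hd1 hd2, α₃, fun β hβ =>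
        le_inf2 gY (h1 β (le_trans hh1 hβ)) (h2 β (le_trans hh2 hβ))⟩,
      inf2_le_left gY d1 d2, inf2_le_right gY d1 d2⟩
  · constructor
    · intro d hd
      exact hd.1
    · intro c hc
      set q : ↥(obDual ↥(obDual X)) := sup2 gY c 0 with hqdef
      have hq0 : 0 ≤ q := le_sup2_right gY c 0
      have hcq : c ≤ q := le_sup2_left gY c 0
      have hqD : ∀ d ∈ D, q ≤ d := fun d hd => sup2_le gY (hc hd) hd.1
      have stepB : ∀ u : X, 0 ≤ u → inf2 gY q (hat u) ≤ 0 := by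
        intro u hu
        obtain ⟨Du, hDune, hDudir, hDuglb, hDusand⟩ := huo u hu
        have himg := hreg Du hDune hDudir hDuglb
        have hlow : inf2 gY q (hat u) ∈ lowerBounds (hatEl X (obDual X) '' Du) := by
          rintro _ ⟨d, hd, rfl⟩
          obtain ⟨α₀, hα₀⟩ := hDusand d hd
          obtain ⟨p, hp1, hp2⟩ := hp α₀
          have hfin : ∀ a, FinSups gY {e | ∃ β, α₀ ≤ β ∧ e = z β} a →
              inf2 gY a (hat u) ≤ hat d := by
            intro a ha
            refine FinSups.rec (motive := fun a _ => inf2 gY a (hat u) ≤ hat d) ?_ ?_ ha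
            · intro a hmem
              obtain ⟨β, hβ, rfl⟩ := hmem
              have h1 : z β ≤ hat |x β - l| := le_trans (hzA β) (hAhabs β)
              have h2 : inf2 gY (z β) (hat u) ≤ inf2 gY (hat |x β - l|) (hat u) :=
                inf2_mono gY h1 le_rfl
              have h3 := hat_inf_le (X := X) |x β - l| u
              have h4 : |x β - l| ⊓ u ≤ d := by
                have := (hα₀ β hβ).2
                simpa using this
              exact le_trans h2 (le_trans h3 (hat_mono h4))
            · intro e1 e2 hfa hfb iha ihb
              refine inf2_distrib_le gY (A := {e1, e2}) (s := sup2 gY e1 e2)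
                (c := hat u) (m := hat d) ?_ ?_ ?_
              · intro e he
                rcases he with rfl | he
                · exact le_sup2_left gY _ _
                · rw [Set.mem_singleton_iff] at he
                  subst he
                  exact le_sup2_right gY _ _
              · intro K hK
                exact sup2_le gY (hK e1 (Set.mem_insert e1 {e2}))
                  (hK e2 (Set.mem_insert_of_mem e1 rfl))
              · intro e he
                rcases he with rfl | he
                · exact iha
                · rw [Set.mem_singleton_iff] at he
                  subst he
                  exact ihb
          have h5 : inf2 gY q (hat u) ≤ inf2 gY p (hat u) :=
            inf2_mono gY (hqD p (hpD α₀ p hp1)) le_rfl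
          have h6 : inf2 gY p (hat u) ≤ hat d :=
            inf2_distrib_le gY (A := {a | FinSups gY {e | ∃ β, α₀ ≤ β ∧ e = z β} a})
              hp1 hp2 hfin
          exact le_trans h5 h6
        exact himg.2 hlow
      obtain ⟨p, hp1, hp2⟩ := hp (Classical.arbitrary ι)
      have hqp : q ≤ p := hqD p (hpD _ p hp1)
      have hfinC : ∀ a, FinSups gY {e | ∃ β, Classical.arbitrary ι ≤ β ∧ e = z β} a →
          inf2 gY a q ≤ 0 := by
        intro a ha
        refine FinSups.rec (motive := fun a _ => inf2 gY a q ≤ 0) ?_ ?_ ha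
        · intro a hmem
          obtain ⟨β, hβ, rfl⟩ := hmem
          have h1 : inf2 gY (z β) q ≤ inf2 gY q (hat |x β - l|) :=
            le_inf2 gY (inf2_le_right gY _ _)
              (le_trans (inf2_le_left gY _ _) (le_trans (hzA β) (hAhabs β)))
          exact le_trans h1 (stepB _ (abs_nonneg _))
        · intro e1 e2 hfa hfb iha ihb
          refine inf2_distrib_le gY (A := {e1, e2}) (s := sup2 gY e1 e2)
            (c := q) (m := 0) ?_ ?_ ?_
          · intro e he
            rcases he with rfl | he
            · exact le_sup2_left gY _ _
            · rw [Set.mem_singleton_iff] at he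
              subst he
              exact le_sup2_right gY _ _
          · intro K hK
            exact sup2_le gY (hK e1 (Set.mem_insert e1 {e2}))
              (hK e2 (Set.mem_insert_of_mem e1 rfl))
          · intro e he
            rcases he with rfl | he
            · exact iha
            · rw [Set.mem_singleton_iff] at he
              subst he
              exact ihb
      have hfinal : inf2 gY p q ≤ 0 :=
        inf2_distrib_le gY (A := {a | FinSups gY
          {e | ∃ β, Classical.arbitrary ι ≤ β ∧ e = z β} a}) hp1 hp2 hfinC
      have hqle : q ≤ inf2 gY p q := le_inf2 gY hqp le_rfl
      exact le_trans hcq (le_trans hqle hfinal)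
  · rintro d ⟨hd0, α₀, hα₀⟩
    obtain ⟨α₂, h21, h22⟩ := exists_ge_ge α₀ α₁
    refine ⟨α₂, fun β hβ => ?_⟩
    have h1 : A β ≤ d := le_trans (hAz β (le_trans h22 hβ)) (hα₀ β (le_trans h21 hβ))
    have h2 : hat (x β) - hat l ≤ d := by
      have := le_trans (hAyle β) h1
      rwa [hat_sub'] at this
    have h3 : hat l - hat (x β) ≤ d := by
      have := le_trans (hAyle' β) h1
      rwa [hat_sub', neg_sub (hat (x β)) (hat l)] at this
    constructor
    · show hat l - d ≤ hat (x β)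
      rw [sub_le_comm (a := hat l) (b := hat (x β)) (c := d)] at h3
      exact h3
    · show hat (x β) ≤ hat l + d
      have := (sub_le_iff_le_add (a := hat (x β)) (c := hat l) (b := d)).mp h2
      rwa [add_comm] at this
end

section
/- Let X be a Banach lattice and y an order continuous linear functional on X. If y(x_n) → 0 for every disjoint sequence x_n in X whose canonical image is order bounded in X**, then y(x_α) → 0 for every net x_α that is uo-null in X and whose canonical image is eventually order bounded in X**. -/
set_option linter.unusedSectionVars false
set_option maxHeartbeats 1000000

open Filter Set

section VL

variable (X : Type*) [Lattice X] [AddCommGroup X]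
  [CovariantClass X X (· + ·) (· ≤ ·)] [Module ℝ X] [PosSMulMono ℝ X]

/-- Shortcut instance (added in the port): the order of `X~~`, which instance search
no longer finds by itself; it is `instSubPre` itself. -/
noncomputable instance instSubPreBidual : Preorder ↥(obDual ↥(obDual X)) :=
  instSubPre ↥(obDual X) (obDual ↥(obDual X))

end VL



section Proof19Machinery

open NormedSpace

variable {X : Type*} [NormedAddCommGroup X] [Lattice X] [IsOrderedAddMonoid X] [HasSolidNorm X] [NormedSpace ℝ X] [PosSMulMono ℝ X]

theorem my_decomp (a u : X) : a = a ⊓ u + (a - u)⁺ := by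
  have : a - a ⊓ u = (a - u)⁺ := by rw [posPart_def, sub_inf]; simp [sup_comm]
  rw [← this]; abel

theorem my_smul_nonneg {c : ℝ} {a : X} (hc : 0 ≤ c) (ha : 0 ≤ a) : 0 ≤ c • a := by
  simpa using smul_le_smul_of_nonneg_left ha hc

theorem my_scalar_mono {c d : ℝ} {a : X} (h : c ≤ d) (ha : 0 ≤ a) : c • a ≤ d • a := by
  have h1 : 0 ≤ (d - c) • a := my_smul_nonneg (by linarith) ha
  have h2 := add_le_add_right h1 (c • a)
  calc c • a = c • a + 0 := by abel
  _ ≤ c • a + (d - c) • a := h2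
  _ = d • a := by rw [← add_smul]; ring_nf

theorem my_smul_sup {c : ℝ} (hc : 0 < c) (a b : X) : c • (a ⊔ b) = (c • a) ⊔ (c • b) := by
  apply le_antisymm
  · have h1 : a ⊔ b ≤ c⁻¹ • ((c • a) ⊔ (c • b)) := by
      apply sup_le
      · have := smul_le_smul_of_nonneg_left (le_sup_left : c • a ≤ (c • a) ⊔ (c • b)) (inv_nonneg.mpr hc.le)
        rwa [inv_smul_smul₀ hc.ne'] at this
      · have := smul_le_smul_of_nonneg_left (le_sup_right : c • b ≤ (c • a) ⊔ (c • b)) (inv_nonneg.mpr hc.le)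
        rwa [inv_smul_smul₀ hc.ne'] at this
    have := smul_le_smul_of_nonneg_left h1 hc.le
    rwa [smul_inv_smul₀ hc.ne'] at this
  · exact sup_le (smul_le_smul_of_nonneg_left le_sup_left hc.le)
      (smul_le_smul_of_nonneg_left le_sup_right hc.le)

theorem my_smul_inf {c : ℝ} (hc : 0 < c) (a b : X) : c • (a ⊓ b) = (c • a) ⊓ (c • b) := by
  apply le_antisymm
  · exact le_inf (smul_le_smul_of_nonneg_left inf_le_left hc.le)
      (smul_le_smul_of_nonneg_left inf_le_right hc.le)
  · have h1 : c⁻¹ • ((c • a) ⊓ (c • b)) ≤ a ⊓ b := by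
      apply le_inf
      · have := smul_le_smul_of_nonneg_left (inf_le_left : (c • a) ⊓ (c • b) ≤ c • a) (inv_nonneg.mpr hc.le)
        rwa [inv_smul_smul₀ hc.ne'] at this
      · have := smul_le_smul_of_nonneg_left (inf_le_right : (c • a) ⊓ (c • b) ≤ c • b) (inv_nonneg.mpr hc.le)
        rwa [inv_smul_smul₀ hc.ne'] at this
    have := smul_le_smul_of_nonneg_left h1 hc.le
    rwa [smul_inv_smul₀ hc.ne'] at this

theorem my_smul_posPart {c : ℝ} (hc : 0 < c) (a : X) : (c • a)⁺ = c • a⁺ := by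
  rw [posPart_def, posPart_def, my_smul_sup hc, smul_zero]

/-- Key disjointness lemma. -/
theorem my_disjoint {a b : X} (hb : 0 ≤ b) {s t : ℝ} (ht : 0 < t)
    (hst : 1 ≤ s * t) : (a - s • b)⁺ ⊓ (b - t • a)⁺ = 0 := by
  set e := (a - s • b)⁺ ⊓ (b - t • a)⁺ with he
  have he0 : 0 ≤ e := le_inf (posPart_nonneg _) (posPart_nonneg _)
  have h1 : t • e ≤ (t • a - (t * s) • b)⁺ := by
    calc t • e ≤ t • (a - s • b)⁺ := smul_le_smul_of_nonneg_left inf_le_left ht.le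
    _ = (t • (a - s • b))⁺ := (my_smul_posPart ht _).symm
    _ = (t • a - (t * s) • b)⁺ := by rw [smul_sub, smul_smul]
  have h2 : (t • a - (t * s) • b)⁺ ≤ (t • a - b)⁺ := by
    apply sup_le_sup_right
    have : b ≤ (t * s) • b := by
      calc b = (1:ℝ) • b := (one_smul ℝ b).symm
      _ ≤ (t * s) • b := my_scalar_mono (by nlinarith [mul_comm s t]) hb
    exact sub_le_sub_left this _
  have h3 : t • e ≤ (b - t • a)⁻ := by
    rw [negPart_def, neg_sub]
    calc t • e ≤ (t • a - (t*s) • b)⁺ := h1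
    _ ≤ (t • a - b)⁺ := h2
    _ = (t • a - b) ⊔ 0 := posPart_def _
  set r := min t 1 with hr
  have hrpos : 0 < r := lt_min ht one_pos
  have h5 : r • e ≤ (b - t • a)⁺ := by
    calc r • e ≤ 1 • e := my_scalar_mono (min_le_right _ _) he0
    _ = e := one_smul _ _
    _ ≤ _ := inf_le_right
  have h6 : r • e ≤ (b - t • a)⁻ := le_trans (my_scalar_mono (min_le_left _ _) he0) h3
  have h7 : r • e ≤ 0 := by
    calc r • e ≤ (b - t • a)⁺ ⊓ (b - t • a)⁻ := le_inf h5 h6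
    _ = 0 := posPart_inf_negPart_eq_zero _
  have h8 : e ≤ 0 := by
    have := smul_le_smul_of_nonneg_left h7 (inv_nonneg.mpr hrpos.le)
    rwa [inv_smul_smul₀ hrpos.ne', smul_zero] at this
  exact le_antisymm h8 he0

/-- `(a+b) ⊓ c ≤ a ⊓ c + b ⊓ c` for nonnegative elements. -/
theorem my_inf_add {a b c : X} (ha : 0 ≤ a) (hb : 0 ≤ b) (hc : 0 ≤ c) :
    (a + b) ⊓ c ≤ a ⊓ c + b ⊓ c := by
  have e1 : a ⊓ c + b ⊓ c = ((a ⊓ c) + b) ⊓ ((a ⊓ c) + c) := add_inf _ _ _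
  have e2 : (a ⊓ c) + b = (a + b) ⊓ (c + b) := inf_add _ _ _
  have e3 : (a ⊓ c) + c = (a + c) ⊓ (c + c) := inf_add _ _ _
  rw [e1, e2, e3]
  refine le_inf (le_inf inf_le_left ?_) (le_inf ?_ ?_)
  · exact le_trans inf_le_right (le_add_of_nonneg_right hb)
  · exact le_trans inf_le_right (le_add_of_nonneg_left ha)
  · exact le_trans inf_le_right (le_add_of_nonneg_left hc)

theorem my_disjoint_nsmul {a b : X} (ha : 0 ≤ a) (hb : 0 ≤ b) (hab : a ⊓ b = 0) (n : ℕ) :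
    a ⊓ ((n:ℝ) • b) = 0 := by
  induction n with
  | zero => simpa using inf_eq_right.mpr ha
  | succ n ih =>
    have hnb : 0 ≤ (n:ℝ) • b := my_smul_nonneg (by positivity) hb
    have h1 : a ⊓ (((n:ℝ) + 1) • b) ≤ a ⊓ ((n:ℝ) • b) + a ⊓ b := by
      have hsum : ((n:ℝ) + 1) • b = (n:ℝ) • b + b := by rw [add_smul, one_smul]
      rw [hsum, inf_comm]
      calc ((n:ℝ) • b + b) ⊓ a ≤ (n:ℝ) • b ⊓ a + b ⊓ a := my_inf_add hnb hb ha
      _ = a ⊓ ((n:ℝ) • b) + a ⊓ b := by rw [inf_comm, inf_comm b a]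
    have h2 : a ⊓ (((n:ℝ) + 1) • b) ≤ 0 := by rw [ih, hab] at h1; simpa using h1
    have h3 : 0 ≤ a ⊓ (((n:ℝ) + 1) • b) := le_inf ha (my_smul_nonneg (by positivity) hb)
    have := le_antisymm h2 h3
    simpa [add_smul] using this

theorem my_norm_mono {a b : X} (ha : 0 ≤ a) (hab : a ≤ b) : ‖a‖ ≤ ‖b‖ := by
  apply norm_le_norm_of_abs_le_abs
  rw [abs_of_nonneg ha, abs_of_nonneg (le_trans ha hab)]
  exact hab

theorem my_posPart_eq {a : X} (ha : 0 ≤ a) : a⁺ = a := by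
  rw [posPart_def, sup_eq_left]; exact ha

theorem my_negPart_eq {a : X} (ha : 0 ≤ a) : a⁻ = 0 := by
  rw [negPart_def, sup_eq_right]; simpa using ha

section PartB
variable (y : X →ₗ[ℝ] ℝ)

/-- The upper envelope `y⁺(u) = sup { y v : 0 ≤ v ≤ u }` as a plain function. -/
noncomputable def posFun (u : X) : ℝ := sSup (⇑y '' {v : X | 0 ≤ v ∧ v ≤ u})

variable {y}

theorem posFun_set_nonempty {u : X} (hu : 0 ≤ u) :
    (⇑y '' {v : X | 0 ≤ v ∧ v ≤ u}).Nonempty :=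
  ⟨y 0, ⟨0, ⟨le_refl 0, hu⟩, rfl⟩⟩

/-- An order-continuous functional is bounded on order intervals. -/
theorem ordcont_orderBounded [CompleteSpace X] (hy : OrdContE y) {u : X} (hu : 0 ≤ u) :
    ∃ M : ℝ, ∀ v : X, 0 ≤ v → v ≤ u → |y v| ≤ M := by
  by_contra hcon
  push_neg at hcon
  have hv : ∀ n : ℕ, ∃ v : X, 0 ≤ v ∧ v ≤ u ∧ (4:ℝ)^n < |y v| := by
    intro n
    obtain ⟨v, h1, h2, h3⟩ := hcon ((4:ℝ)^n)
    exact ⟨v, h1, h2, h3⟩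
  choose v hv0 hvu hvy using hv
  -- the geometric series
  set f : ℕ → X := fun k => ((2:ℝ)⁻¹)^k • v k with hf
  have hfnn : ∀ k, 0 ≤ f k := fun k => my_smul_nonneg (by positivity) (hv0 k)
  have hfle : ∀ k, f k ≤ ((2:ℝ)⁻¹)^k • u := fun k =>
    smul_le_smul_of_nonneg_left (hvu k) (by positivity)
  have hsum : Summable f := by
    apply Summable.of_norm
    apply Summable.of_nonneg_of_le (fun k => norm_nonneg _)
      (fun k => ?_) (Summable.mul_right ‖u‖ (summable_geometric_of_lt_one (r := (2⁻¹:ℝ)) (by norm_num) (by norm_num)))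
    show ‖((2:ℝ)⁻¹)^k • v k‖ ≤ (2⁻¹:ℝ)^k * ‖u‖
    have : ‖v k‖ ≤ ‖u‖ := my_norm_mono (hv0 k) (hvu k)
    rw [norm_smul]
    have he : ‖((2:ℝ)⁻¹)^k‖ = (2⁻¹:ℝ)^k := by
      rw [norm_pow, Real.norm_eq_abs, abs_of_nonneg]; norm_num
    rw [he]
    exact mul_le_mul_of_nonneg_left this (by positivity)
  -- tails
  set t : ℕ → X := fun n => ∑' k, f (k + n + 1) with ht
  have hsumt : ∀ n, Summable (fun k => f (k + n + 1)) := by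
    intro n
    have := (summable_nat_add_iff (f := f) (n + 1)).mpr hsum
    apply this.congr
    intro k
    have e : k + (n + 1) = k + n + 1 := by omega
    rw [e]
  have hstep : ∀ n, t n = f (n + 1) + t (n + 1) := by
    intro n
    have h0 : t n = f (0 + n + 1) + ∑' k, f (k + 1 + n + 1) := Summable.tsum_eq_zero_add (hsumt n)
    have e0 : (0:ℕ) + n + 1 = n + 1 := by omega
    have e2 : ∑' k, f (k + 1 + n + 1) = ∑' k, f (k + (n + 1) + 1) := by
      apply tsum_congr; intro k
      have e3 : k + 1 + n + 1 = k + (n + 1) + 1 := by omega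
      rw [e3]
    rw [h0, e0, e2]
  have htnn : ∀ n, 0 ≤ t n := fun n => tsum_nonneg (fun k => hfnn _)
  have htle : ∀ n, t n ≤ ((2:ℝ)⁻¹)^n • u := by
    intro n
    apply Summable.tsum_le_of_sum_le (hsumt n)
    intro s
    have hcoef : ∑ k ∈ s, ((2:ℝ)⁻¹)^(k+n+1) ≤ ((2:ℝ)⁻¹)^n := by
      have h1 : ∑ k ∈ s, ((2:ℝ)⁻¹)^(k+n+1) = ((2:ℝ)⁻¹)^(n+1) * ∑ k ∈ s, ((2:ℝ)⁻¹)^k := by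
        rw [Finset.mul_sum]
        apply Finset.sum_congr rfl
        intro k _
        rw [← pow_add]
        congr 1
        omega
      have h2 : ∑ k ∈ s, ((2:ℝ)⁻¹)^k ≤ 2 := by
        have h3 : ∑ k ∈ s, ((2:ℝ)⁻¹)^k ≤ ∑' k : ℕ, ((2:ℝ)⁻¹)^k :=
          Summable.sum_le_tsum s (fun k _ => by positivity)
            (summable_geometric_of_lt_one (by norm_num) (by norm_num))
        have h4 : ∑' k : ℕ, ((2:ℝ)⁻¹)^k = 2 := tsum_geometric_inv_two
        linarith
      calc ∑ k ∈ s, ((2:ℝ)⁻¹)^(k+n+1) = ((2:ℝ)⁻¹)^(n+1) * ∑ k ∈ s, ((2:ℝ)⁻¹)^k := h1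
      _ ≤ ((2:ℝ)⁻¹)^(n+1) * 2 := by
          apply mul_le_mul_of_nonneg_left h2 (by positivity)
      _ = ((2:ℝ)⁻¹)^n := by rw [pow_succ]; ring
    calc ∑ k ∈ s, f (k + n + 1) ≤ ∑ k ∈ s, ((2:ℝ)⁻¹)^(k+n+1) • u :=
          Finset.sum_le_sum (fun k _ => hfle _)
    _ = (∑ k ∈ s, ((2:ℝ)⁻¹)^(k+n+1)) • u := by rw [Finset.sum_smul]
    _ ≤ ((2:ℝ)⁻¹)^n • u := my_scalar_mono hcoef hu
  have hanti : Antitone t := by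
    apply antitone_nat_of_succ_le
    intro n
    rw [hstep n]
    exact le_add_of_nonneg_left (hfnn _)
  have hdir : DirectedOn (· ≥ ·) (Set.range t) := by
    rintro a ⟨i, rfl⟩ b ⟨j, rfl⟩
    exact ⟨t (max i j), ⟨max i j, rfl⟩, hanti (le_max_left i j), hanti (le_max_right i j)⟩
  have hglb : IsGLB (Set.range t) 0 := by
    constructor
    · rintro w ⟨n, rfl⟩
      exact htnn n
    · intro b hb
      have hb1 : ∀ n, b⁺ ≤ ((2:ℝ)⁻¹)^n • u := by
        intro n
        rw [posPart_def]
        exact sup_le (le_trans (hb ⟨n, rfl⟩) (htle n)) (my_smul_nonneg (by positivity) hu)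
      have hb2 : ∀ n : ℕ, ‖b⁺‖ ≤ ((2:ℝ)⁻¹)^n * ‖u‖ := by
        intro n
        calc ‖b⁺‖ ≤ ‖((2:ℝ)⁻¹)^n • u‖ := my_norm_mono (posPart_nonneg b) (hb1 n)
        _ = ((2:ℝ)⁻¹)^n * ‖u‖ := by
            rw [norm_smul, Real.norm_eq_abs, abs_of_nonneg (by positivity : (0:ℝ) ≤ ((2:ℝ)⁻¹)^n)]
      have hb3 : ‖b⁺‖ ≤ 0 := by
        apply ge_of_tendsto' (f := fun n : ℕ => ((2:ℝ)⁻¹)^n * ‖u‖) (x := Filter.atTop)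
        · have := (tendsto_pow_atTop_nhds_zero_of_lt_one (r := (2⁻¹:ℝ)) (by norm_num) (by norm_num)).mul_const ‖u‖
          simpa using this
        · exact hb2
      have hb4 : b⁺ = 0 := norm_le_zero_iff.mp hb3
      exact posPart_eq_zero.mp hb4
  obtain ⟨d, hdD, hd⟩ := hy (Set.range t) ⟨t 0, ⟨0, rfl⟩⟩ hdir hglb 1 one_pos
  obtain ⟨N, hN⟩ := hdD
  have hN0 : |y (t N)| < 1 := hd (t N) ⟨N, rfl⟩ (le_of_eq hN)
  have hN1 : |y (t (N+1))| < 1 := hd (t (N+1)) ⟨N+1, rfl⟩ (by rw [← hN]; exact hanti (Nat.le_succ N))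
  have hyf : y (f (N+1)) = y (t N) - y (t (N+1)) := by
    rw [hstep N, map_add]; ring
  have hyf2 : |y (f (N+1))| < 2 := by
    rw [hyf]
    calc |y (t N) - y (t (N+1))| ≤ |y (t N)| + |y (t (N+1))| := abs_sub _ _
    _ < 2 := by linarith
  have hyf3 : y (f (N+1)) = ((2:ℝ)⁻¹)^(N+1) * y (v (N+1)) := by
    rw [hf]; simp only [map_smul, smul_eq_mul]
  have hyf4 : |y (v (N+1))| < 2 * 2^(N+1) := by
    rw [hyf3, abs_mul, abs_of_nonneg (by positivity : (0:ℝ) ≤ ((2:ℝ)⁻¹)^(N+1))] at hyf2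
    have hp : (0:ℝ) < (2:ℝ)^(N+1) := by positivity
    have h5 : ((2:ℝ)⁻¹)^(N+1) = ((2:ℝ)^(N+1))⁻¹ := by rw [inv_pow]
    rw [h5] at hyf2
    have h6 := mul_lt_mul_of_pos_left hyf2 hp
    rw [← mul_assoc, mul_inv_cancel₀ hp.ne', one_mul] at h6
    calc |y (v (N+1))| < (2:ℝ)^(N+1) * 2 := h6
    _ = 2 * 2^(N+1) := by ring
  have hyf5 : (4:ℝ)^(N+1) < 2 * 2^(N+1) := lt_trans (hvy (N+1)) hyf4
  have hfin : (2:ℝ) * 2^(N+1) ≤ 4^(N+1) := by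
    have h1 : (4:ℝ)^(N+1) = 2^(2*(N+1)) := by
      rw [pow_mul]; norm_num
    rw [h1, ← pow_succ']
    apply pow_le_pow_right₀ (by norm_num)
    omega
  linarith

end PartB

section PartC
variable {y : X →ₗ[ℝ] ℝ}

theorem posFun_le_of (hB : ∀ w : X, 0 ≤ w → BddAbove (⇑y '' {v : X | 0 ≤ v ∧ v ≤ w}))
    {v u : X} (h1 : 0 ≤ v) (h2 : v ≤ u) : y v ≤ posFun y u :=
  le_csSup (hB u (h1.trans h2)) ⟨v, ⟨h1, h2⟩, rfl⟩

theorem posFun_nonneg (hB : ∀ w : X, 0 ≤ w → BddAbove (⇑y '' {v : X | 0 ≤ v ∧ v ≤ w}))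
    {u : X} (hu : 0 ≤ u) : 0 ≤ posFun y u := by
  have := posFun_le_of hB (le_refl (0:X)) hu
  simpa using this

theorem posFun_mono (hB : ∀ w : X, 0 ≤ w → BddAbove (⇑y '' {v : X | 0 ≤ v ∧ v ≤ w}))
    {u u' : X} (hu : 0 ≤ u) (huv : u ≤ u') : posFun y u ≤ posFun y u' := by
  apply csSup_le (posFun_set_nonempty hu)
  rintro r ⟨v, ⟨h1, h2⟩, rfl⟩
  exact posFun_le_of hB h1 (h2.trans huv)

theorem posFun_abs_le (hB : ∀ w : X, 0 ≤ w → BddAbove (⇑y '' {v : X | 0 ≤ v ∧ v ≤ w}))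
    {v u : X} (h1 : 0 ≤ v) (h2 : v ≤ u) : posFun y v ≤ posFun y u :=
  posFun_mono hB h1 h2

theorem posFun_add (hB : ∀ w : X, 0 ≤ w → BddAbove (⇑y '' {v : X | 0 ≤ v ∧ v ≤ w}))
    {u v : X} (hu : 0 ≤ u) (hv : 0 ≤ v) :
    posFun y (u + v) = posFun y u + posFun y v := by
  apply le_antisymm
  · apply csSup_le (posFun_set_nonempty (by positivity))
    rintro r ⟨w, ⟨h1, h2⟩, rfl⟩
    have hw1 : 0 ≤ w ⊓ u := le_inf h1 hu
    have hw1' : w ⊓ u ≤ u := inf_le_right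
    have hw2 : 0 ≤ (w - u)⁺ := posPart_nonneg _
    have hw2' : (w - u)⁺ ≤ v := by
      rw [posPart_def]
      exact sup_le (by simpa using sub_le_sub_right h2 u) hv
    have hdec : w = w ⊓ u + (w - u)⁺ := my_decomp w u
    calc y w = y (w ⊓ u) + y ((w - u)⁺) := by rw [← map_add, ← hdec]
    _ ≤ posFun y u + posFun y v :=
        add_le_add (posFun_le_of hB hw1 hw1') (posFun_le_of hB hw2 hw2')
  · rw [← le_sub_iff_add_le]
    apply csSup_le (posFun_set_nonempty hu)
    rintro r ⟨w₁, ⟨g1, g2⟩, rfl⟩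
    rw [le_sub_iff_add_le, add_comm, ← le_sub_iff_add_le]
    apply csSup_le (posFun_set_nonempty hv)
    rintro r ⟨w₂, ⟨h1, h2⟩, rfl⟩
    rw [le_sub_iff_add_le]
    calc y w₂ + y w₁ = y (w₁ + w₂) := by rw [map_add]; ring
    _ ≤ posFun y (u + v) := posFun_le_of hB (by positivity) (add_le_add g2 h2)

theorem posFun_smul (hB : ∀ w : X, 0 ≤ w → BddAbove (⇑y '' {v : X | 0 ≤ v ∧ v ≤ w}))
    {c : ℝ} (hc : 0 < c) {u : X} (hu : 0 ≤ u) :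
    posFun y (c • u) = c * posFun y u := by
  have key : ∀ (d : ℝ) (w : X), 0 < d → 0 ≤ w → posFun y (d • w) ≤ d * posFun y w := by
    intro d w hd hw
    apply csSup_le (posFun_set_nonempty (my_smul_nonneg hd.le hw))
    rintro r ⟨v, ⟨h1, h2⟩, rfl⟩
    have e1 : v = d • (d⁻¹ • v) := by rw [smul_smul, mul_inv_cancel₀ hd.ne', one_smul]
    have h3 : 0 ≤ d⁻¹ • v := my_smul_nonneg (by positivity) h1
    have h4 : d⁻¹ • v ≤ w := by
      have := smul_le_smul_of_nonneg_left h2 (inv_nonneg.mpr hd.le)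
      rwa [smul_smul, inv_mul_cancel₀ hd.ne', one_smul] at this
    calc y v = d * y (d⁻¹ • v) := by
          conv_lhs => rw [e1]
          rw [map_smul, smul_eq_mul]
    _ ≤ d * posFun y w := mul_le_mul_of_nonneg_left (posFun_le_of hB h3 h4) hd.le
  apply le_antisymm (key c u hc hu)
  · have h5 := key c⁻¹ (c • u) (by positivity) (my_smul_nonneg hc.le hu)
    rw [smul_smul, inv_mul_cancel₀ hc.ne', one_smul] at h5
    have := mul_le_mul_of_nonneg_left h5 hc.le
    rwa [← mul_assoc, mul_inv_cancel₀ hc.ne', one_mul] at this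

end PartC

section PartD
variable {y : X →ₗ[ℝ] ℝ}

theorem ordcont_bddAbove [CompleteSpace X] (hy : OrdContE y) :
    ∀ w : X, 0 ≤ w → BddAbove (⇑y '' {v : X | 0 ≤ v ∧ v ≤ w}) := by
  intro w hw
  obtain ⟨M, hM⟩ := ordcont_orderBounded hy hw
  refine ⟨M, ?_⟩
  rintro r ⟨v, ⟨h1, h2⟩, rfl⟩
  exact (le_abs_self _).trans (hM v h1 h2)

theorem neg_ordContE (hy : OrdContE y) : OrdContE (-y) := by
  intro D hne hdir hglb ε hε
  obtain ⟨d, hd, h⟩ := hy D hne hdir hglb ε hε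
  exact ⟨d, hd, fun e he hed => by
    have := h e he hed
    simpa [abs_neg] using this⟩

/-- Order continuity of the envelope `posFun` : along any set directed downward to `0`,
some element has small envelope. -/
theorem posFun_ordcont [CompleteSpace X] (hy : OrdContE y) (D : Set X) (hne : D.Nonempty)
    (hdir : DirectedOn (· ≥ ·) D) (hglb : IsGLB D 0) {ε : ℝ} (hε : 0 < ε) :
    ∃ d ∈ D, posFun y d < ε := by
  have hB := ordcont_bddAbove hy
  have hDnn : ∀ d ∈ D, (0:X) ≤ d := fun d hd => hglb.1 hd
  by_contra hcon
  push_neg at hcon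
  obtain ⟨d₀, hd₀⟩ := hne
  have hPd₀ : ε ≤ posFun y d₀ := hcon d₀ hd₀
  -- pick an almost-maximizer
  have hlt : posFun y d₀ - ε/4 < posFun y d₀ := by linarith
  obtain ⟨r, ⟨w, ⟨hw0, hwd₀⟩, rfl⟩, hrgt⟩ :=
    exists_lt_of_lt_csSup (posFun_set_nonempty (hDnn d₀ hd₀)) hlt
  -- the auxiliary downward directed set
  set D' : Set X := (fun d => w ⊓ d) '' {d : X | d ∈ D ∧ d ≤ d₀} with hD'
  have hne' : D'.Nonempty := ⟨w ⊓ d₀, ⟨d₀, ⟨hd₀, le_refl _⟩, rfl⟩⟩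
  have hdir' : DirectedOn (· ≥ ·) D' := by
    rintro _ ⟨d1, ⟨hd1, hd1'⟩, rfl⟩ _ ⟨d2, ⟨hd2, hd2'⟩, rfl⟩
    obtain ⟨d3, hd3, h31, h32⟩ := hdir d1 hd1 d2 hd2
    exact ⟨w ⊓ d3, ⟨d3, ⟨hd3, le_trans h31 hd1'⟩, rfl⟩,
      inf_le_inf_left w h31, inf_le_inf_left w h32⟩
  have hglb' : IsGLB D' 0 := by
    constructor
    · rintro _ ⟨d, ⟨hd, _⟩, rfl⟩
      exact le_inf hw0 (hDnn d hd)
    · intro b hb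
      apply hglb.2
      intro d hd
      obtain ⟨d', hd', h1, h2⟩ := hdir d hd d₀ hd₀
      exact le_trans (le_trans (hb ⟨d', ⟨hd', h2⟩, rfl⟩) inf_le_right) h1
  obtain ⟨e, heD', he⟩ := hy D' hne' hdir' hglb' (ε/4) (by linarith)
  obtain ⟨d₁, ⟨hd₁, hd₁'⟩, rfl⟩ := heD'
  have hyw : |y (w ⊓ d₁)| < ε/4 := he _ ⟨d₁, ⟨hd₁, hd₁'⟩, rfl⟩ le_rfl
  -- additivity
  have hsplit : posFun y d₀ = posFun y (d₀ - d₁) + posFun y d₁ := by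
    have := posFun_add hB (sub_nonneg.mpr hd₁') (hDnn d₁ hd₁)
    rw [sub_add_cancel] at this
    exact this
  -- the remainder estimate
  have hrem : y w - y (w ⊓ d₁) ≤ posFun y (d₀ - d₁) := by
    have h1 : 0 ≤ w - w ⊓ d₁ := sub_nonneg.mpr inf_le_left
    have h2 : w - w ⊓ d₁ ≤ d₀ - d₁ := by
      have he1 : w - w ⊓ d₁ = (w - d₁)⁺ := by
        rw [posPart_def, sub_inf]; simp [sup_comm]
      rw [he1, posPart_def]
      exact sup_le (sub_le_sub_right hwd₀ d₁) (sub_nonneg.mpr hd₁')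
    have := posFun_le_of hB h1 h2
    rwa [map_sub] at this
  have habs : y (w ⊓ d₁) < ε/4 := (abs_lt.mp hyw).2
  have hfin : posFun y d₁ < ε := by
    have h3 : ε ≤ posFun y d₁ := hcon d₁ hd₁
    have h4 : posFun y d₁ = posFun y d₀ - posFun y (d₀ - d₁) := by linarith [hsplit]
    rw [h4]
    linarith [hrem, hrgt, habs]
  exact absurd hfin (not_lt.mpr (hcon d₁ hd₁))

/-- The "modulus" envelope. -/
noncomputable def rhoFun (y : X →ₗ[ℝ] ℝ) (u : X) : ℝ := posFun y u + posFun (-y) u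

theorem rho_nonneg [CompleteSpace X] (hy : OrdContE y) {u : X} (hu : 0 ≤ u) :
    0 ≤ rhoFun y u :=
  add_nonneg (posFun_nonneg (ordcont_bddAbove hy) hu)
    (posFun_nonneg (ordcont_bddAbove (neg_ordContE hy)) hu)

theorem rho_mono [CompleteSpace X] (hy : OrdContE y) {u u' : X} (hu : 0 ≤ u) (huv : u ≤ u') :
    rhoFun y u ≤ rhoFun y u' :=
  add_le_add (posFun_mono (ordcont_bddAbove hy) hu huv)
    (posFun_mono (ordcont_bddAbove (neg_ordContE hy)) hu huv)

theorem rho_add [CompleteSpace X] (hy : OrdContE y) {u v : X} (hu : 0 ≤ u) (hv : 0 ≤ v) :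
    rhoFun y (u + v) = rhoFun y u + rhoFun y v := by
  unfold rhoFun
  rw [posFun_add (ordcont_bddAbove hy) hu hv,
    posFun_add (ordcont_bddAbove (neg_ordContE hy)) hu hv]
  ring

theorem rho_smul [CompleteSpace X] (hy : OrdContE y) {c : ℝ} (hc : 0 < c) {u : X} (hu : 0 ≤ u) :
    rhoFun y (c • u) = c * rhoFun y u := by
  unfold rhoFun
  rw [posFun_smul (ordcont_bddAbove hy) hc hu,
    posFun_smul (ordcont_bddAbove (neg_ordContE hy)) hc hu]
  ring

theorem abs_le_rho [CompleteSpace X] (hy : OrdContE y) {w u : X} (hw : |w| ≤ u) :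
    |y w| ≤ rhoFun y u := by
  have hB := ordcont_bddAbove hy
  have hB' := ordcont_bddAbove (neg_ordContE hy)
  have hp : w⁺ ≤ u := le_trans (by
    rw [posPart_def]; exact sup_le (le_abs_self w) (abs_nonneg w)) hw
  have hn : w⁻ ≤ u := le_trans (by
    rw [negPart_def]; exact sup_le (neg_le_abs w) (abs_nonneg w)) hw
  have hdec : y w = y w⁺ - y w⁻ := by rw [← map_sub, posPart_sub_negPart]
  rw [abs_le]
  constructor
  · have h1 : y w⁻ ≤ posFun y u := posFun_le_of hB (negPart_nonneg w) hn
    have h2 : (-y) w⁺ ≤ posFun (-y) u := posFun_le_of hB' (posPart_nonneg w) hp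
    have h3 : (-y) w⁺ = -(y w⁺) := rfl
    unfold rhoFun
    rw [hdec]
    linarith [h1, h2, h3 ▸ h2]
  · have h1 : y w⁺ ≤ posFun y u := posFun_le_of hB (posPart_nonneg w) hp
    have h2 : (-y) w⁻ ≤ posFun (-y) u := posFun_le_of hB' (negPart_nonneg w) hn
    have h3 : (-y) w⁻ = -(y w⁻) := rfl
    unfold rhoFun
    rw [hdec]
    rw [h3] at h2
    linarith

theorem rho_ordcont [CompleteSpace X] (hy : OrdContE y) (D : Set X) (hne : D.Nonempty)
    (hdir : DirectedOn (· ≥ ·) D) (hglb : IsGLB D 0) {ε : ℝ} (hε : 0 < ε) :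
    ∃ d ∈ D, rhoFun y d < ε := by
  obtain ⟨d1, hd1, h1⟩ := posFun_ordcont hy D hne hdir hglb (show (0:ℝ) < ε/2 by linarith)
  obtain ⟨d2, hd2, h2⟩ := posFun_ordcont (neg_ordContE hy) D hne hdir hglb
    (show (0:ℝ) < ε/2 by linarith)
  obtain ⟨d3, hd3, h31, h32⟩ := hdir d1 hd1 d2 hd2
  have hd30 : (0:X) ≤ d3 := hglb.1 hd3
  refine ⟨d3, hd3, ?_⟩
  have e1 : posFun y d3 ≤ posFun y d1 := posFun_mono (ordcont_bddAbove hy) hd30 h31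
  have e2 : posFun (-y) d3 ≤ posFun (-y) d2 :=
    posFun_mono (ordcont_bddAbove (neg_ordContE hy)) hd30 h32
  unfold rhoFun
  linarith

theorem rho_witness [CompleteSpace X] (hy : OrdContE y) {u : X} (hu : 0 ≤ u) {c : ℝ}
    (hc : 0 ≤ c) (h : c < rhoFun y u) : ∃ w : X, 0 ≤ w ∧ w ≤ u ∧ c/2 < |y w| := by
  unfold rhoFun at h
  rcases lt_or_ge (c/2) (posFun y u) with hcase | hcase
  · obtain ⟨r, ⟨w, ⟨h1, h2⟩, rfl⟩, hr⟩ := exists_lt_of_lt_csSup (posFun_set_nonempty hu) hcase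
    exact ⟨w, h1, h2, lt_of_lt_of_le hr (le_abs_self _)⟩
  · have h2 : c/2 < posFun (-y) u := by linarith
    obtain ⟨r, ⟨w, ⟨h1, h2'⟩, rfl⟩, hr⟩ := exists_lt_of_lt_csSup (posFun_set_nonempty hu) h2
    refine ⟨w, h1, h2', ?_⟩
    have : (-y) w = -(y w) := rfl
    rw [this] at hr
    calc c/2 < -(y w) := hr
    _ ≤ |y w| := neg_le_abs _
end PartD

section PartE

/-- Positivity of a continuous functional. -/
def PosF (f : X →L[ℝ] ℝ) : Prop := ∀ v : X, 0 ≤ v → 0 ≤ f v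

theorem PosF.mono {f : X →L[ℝ] ℝ} (hf : PosF f) {a b : X} (hab : a ≤ b) : f a ≤ f b := by
  have := hf (b - a) (sub_nonneg.mpr hab)
  have h2 : f (b - a) = f b - f a := map_sub f b a
  rw [h2] at this
  linarith

theorem clm_bddAbove (f : X →L[ℝ] ℝ) :
    ∀ w : X, 0 ≤ w → BddAbove (⇑(f : X →ₗ[ℝ] ℝ) '' {v : X | 0 ≤ v ∧ v ≤ w}) := by
  intro w hw
  refine ⟨‖f‖ * ‖w‖, ?_⟩
  rintro r ⟨v, ⟨h1, h2⟩, rfl⟩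
  have h3 : ‖v‖ ≤ ‖w‖ := my_norm_mono h1 h2
  calc (f : X →ₗ[ℝ] ℝ) v ≤ |f v| := le_abs_self _
  _ ≤ ‖f‖ * ‖v‖ := f.le_opNorm v
  _ ≤ ‖f‖ * ‖w‖ := mul_le_mul_of_nonneg_left h3 (norm_nonneg f)

theorem my_norm_posPart (x : X) : ‖x⁺‖ ≤ ‖x‖ := by
  apply norm_le_norm_of_abs_le_abs
  rw [abs_of_nonneg (posPart_nonneg x)]
  rw [posPart_def]
  exact sup_le (le_abs_self x) (abs_nonneg x)

theorem my_norm_negPart (x : X) : ‖x⁻‖ ≤ ‖x‖ := by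
  apply norm_le_norm_of_abs_le_abs
  rw [abs_of_nonneg (negPart_nonneg x)]
  rw [negPart_def]
  exact sup_le (neg_le_abs x) (abs_nonneg x)

theorem my_smul_negPart {c : ℝ} (hc : 0 < c) (a : X) : (c • a)⁻ = c • a⁻ := by
  rw [negPart_def, negPart_def, ← smul_neg, my_smul_sup hc, smul_zero]

theorem my_posPart_neg (a : X) : (-a)⁺ = a⁻ := by rw [negPart_def, posPart_def]

theorem my_negPart_neg (a : X) : (-a)⁻ = a⁺ := by rw [negPart_def, posPart_def, neg_neg]

section ExtLin
variable (q : X → ℝ)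

/-- Linear extension of an additive functional on the positive cone. -/
noncomputable def extLin : X → ℝ := fun x => q x⁺ - q x⁻

variable {q}
variable (hadd : ∀ a b : X, 0 ≤ a → 0 ≤ b → q (a + b) = q a + q b)
variable (hsmul : ∀ (c : ℝ) (a : X), 0 < c → 0 ≤ a → q (c • a) = c * q a)

include hadd

theorem extLin_q_zero : q 0 = 0 := by
  have := hadd 0 0 le_rfl le_rfl
  simpa using this.symm

theorem extLin_eq_on_pos {v : X} (hv : 0 ≤ v) : extLin q v = q v := by
  unfold extLin
  rw [my_posPart_eq hv, my_negPart_eq hv, extLin_q_zero hadd]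
  ring

theorem extLin_add (x z : X) : extLin q (x + z) = extLin q x + extLin q z := by
  have key : (x+z)⁺ + (x⁻ + z⁻) = (x+z)⁻ + (x⁺ + z⁺) := by
    have h1 : (x+z)⁺ - (x+z)⁻ = (x⁺ - x⁻) + (z⁺ - z⁻) := by
      rw [posPart_sub_negPart, posPart_sub_negPart, posPart_sub_negPart]
    have h2 : ∀ a b c d : X, a - b = c → a + (d) = b + (c + d) → True := fun _ _ _ _ _ _ => trivial
    -- rearrange
    have h3 : (x+z)⁺ + (x⁻ + z⁻) - ((x+z)⁻ + (x⁺ + z⁺)) = 0 := by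
      have h4 : (x+z)⁺ + (x⁻ + z⁻) - ((x+z)⁻ + (x⁺ + z⁺))
          = ((x+z)⁺ - (x+z)⁻) - ((x⁺ - x⁻) + (z⁺ - z⁻)) := by abel
      rw [h4, h1]
      abel
    have h5 := sub_eq_zero.mp h3
    exact h5
  have e1 := hadd ((x+z)⁺) (x⁻ + z⁻) (posPart_nonneg _) (add_nonneg (negPart_nonneg _) (negPart_nonneg _))
  have e2 := hadd ((x+z)⁻) (x⁺ + z⁺) (negPart_nonneg _) (add_nonneg (posPart_nonneg _) (posPart_nonneg _))
  have e3 := hadd (x⁻) (z⁻) (negPart_nonneg _) (negPart_nonneg _)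
  have e4 := hadd (x⁺) (z⁺) (posPart_nonneg _) (posPart_nonneg _)
  have e5 : q ((x+z)⁺ + (x⁻ + z⁻)) = q ((x+z)⁻ + (x⁺ + z⁺)) := by rw [key]
  unfold extLin
  rw [e1, e2, e3, e4] at e5
  linarith

include hsmul

theorem extLin_smul (c : ℝ) (x : X) : extLin q (c • x) = c * extLin q x := by
  rcases lt_trichotomy c 0 with hc | hc | hc
  · have hc' : 0 < -c := by linarith
    have e1 : c • x = (-c) • (-x) := by rw [neg_smul, smul_neg, neg_neg]
    unfold extLin
    rw [e1, my_smul_posPart hc', my_smul_negPart hc', my_posPart_neg, my_negPart_neg,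
      hsmul _ _ hc' (negPart_nonneg _), hsmul _ _ hc' (posPart_nonneg _)]
    ring
  · subst hc
    unfold extLin
    rw [zero_smul]
    rw [my_posPart_eq (le_refl (0:X)), my_negPart_eq (le_refl (0:X)), extLin_q_zero hadd]
    ring
  · unfold extLin
    rw [my_smul_posPart hc, my_smul_negPart hc,
      hsmul _ _ hc (posPart_nonneg _), hsmul _ _ hc (negPart_nonneg _)]
    ring

end ExtLin

/-- The linear extension, bundled as a continuous linear map, given a norm bound on the cone. -/
noncomputable def extCLM (q : X → ℝ)
    (hadd : ∀ a b : X, 0 ≤ a → 0 ≤ b → q (a + b) = q a + q b)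
    (hsmul : ∀ (c : ℝ) (a : X), 0 < c → 0 ≤ a → q (c • a) = c * q a)
    (C : ℝ) (hC : 0 ≤ C) (hq : ∀ v : X, 0 ≤ v → |q v| ≤ C * ‖v‖) : X →L[ℝ] ℝ :=
  LinearMap.mkContinuous
    { toFun := extLin q
      map_add' := extLin_add hadd
      map_smul' := extLin_smul hadd hsmul }
    (2 * C)
    (by
      intro x
      have h1 : |q x⁺| ≤ C * ‖x‖ := by
        calc |q x⁺| ≤ C * ‖x⁺‖ := hq _ (posPart_nonneg x)
        _ ≤ C * ‖x‖ := mul_le_mul_of_nonneg_left (my_norm_posPart x) hC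
      have h2 : |q x⁻| ≤ C * ‖x‖ := by
        calc |q x⁻| ≤ C * ‖x⁻‖ := hq _ (negPart_nonneg x)
        _ ≤ C * ‖x‖ := mul_le_mul_of_nonneg_left (my_norm_negPart x) hC
      have h3 : |extLin q x| ≤ |q x⁺| + |q x⁻| := by
        unfold extLin
        exact abs_sub _ _
      calc ‖extLin q x‖ = |extLin q x| := rfl
      _ ≤ |q x⁺| + |q x⁻| := h3
      _ ≤ 2 * C * ‖x‖ := by linarith)

theorem extCLM_apply (q : X → ℝ) (hadd) (hsmul) (C : ℝ) (hC) (hq) (x : X) :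
    extCLM q hadd hsmul C hC hq x = q x⁺ - q x⁻ := rfl

theorem extCLM_norm_le (q : X → ℝ) (hadd) (hsmul) {C : ℝ} (hC : 0 ≤ C) (hq) :
    ‖extCLM q hadd hsmul C hC hq‖ ≤ 2 * C :=
  LinearMap.mkContinuous_norm_le _ (by linarith) _

end PartE

section PartF
variable (f : X →L[ℝ] ℝ)

theorem posFun_clm_absbound : ∀ v : X, 0 ≤ v → |posFun (f : X →ₗ[ℝ] ℝ) v| ≤ ‖f‖ * ‖v‖ := by
  intro v hv
  rw [abs_of_nonneg (posFun_nonneg (clm_bddAbove f) hv)]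
  apply csSup_le (posFun_set_nonempty hv)
  rintro r ⟨w, ⟨h1, h2⟩, rfl⟩
  calc (f : X →ₗ[ℝ] ℝ) w ≤ |f w| := le_abs_self _
  _ ≤ ‖f‖ * ‖w‖ := f.le_opNorm w
  _ ≤ ‖f‖ * ‖v‖ := mul_le_mul_of_nonneg_left (my_norm_mono h1 h2) (norm_nonneg f)

/-- The positive part of a continuous functional. -/
noncomputable def posCLM : X →L[ℝ] ℝ :=
  extCLM (posFun (f : X →ₗ[ℝ] ℝ))
    (fun a b ha hb => posFun_add (clm_bddAbove f) ha hb)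
    (fun c a hc ha => posFun_smul (clm_bddAbove f) hc ha)
    ‖f‖ (norm_nonneg f) (posFun_clm_absbound f)

theorem posCLM_apply_pos {v : X} (hv : 0 ≤ v) : posCLM f v = posFun (f : X →ₗ[ℝ] ℝ) v :=
  extLin_eq_on_pos (fun a b ha hb => posFun_add (clm_bddAbove f) ha hb) hv

theorem posCLM_posF : PosF (posCLM f) := by
  intro v hv
  rw [posCLM_apply_pos f hv]
  exact posFun_nonneg (clm_bddAbove f) hv

theorem le_posCLM {v : X} (hv : 0 ≤ v) : f v ≤ posCLM f v := by
  rw [posCLM_apply_pos f hv]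
  exact posFun_le_of (clm_bddAbove f) hv le_rfl

theorem posCLM_sub_posF : PosF (posCLM f - f) := by
  intro v hv
  have := le_posCLM f hv
  simp only [ContinuousLinearMap.coe_sub', Pi.sub_apply]
  linarith

theorem posCLM_norm_le : ‖posCLM f‖ ≤ 2 * ‖f‖ :=
  extCLM_norm_le _ _ _ (norm_nonneg f) _

/-- The component functional associated to `e`. -/
noncomputable def compQ (f : X →L[ℝ] ℝ) (e : X) : X → ℝ := fun v => ⨆ n : ℕ, f (v ⊓ (n:ℝ) • e)

variable {f}
variable (hf : PosF f) (e : X) (he : 0 ≤ e)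

include hf he

theorem compQ_bdd {v : X} (hv : 0 ≤ v) : BddAbove (Set.range (fun n : ℕ => f (v ⊓ (n:ℝ) • e))) := by
  refine ⟨f v, ?_⟩
  rintro r ⟨n, rfl⟩
  exact hf.mono inf_le_left

theorem compQ_nonneg {v : X} (hv : 0 ≤ v) : 0 ≤ compQ f e v := by
  apply le_ciSup_of_le (compQ_bdd hf e he hv) 0
  have h : v ⊓ ((0:ℕ):ℝ) • e = 0 := by
    rw [Nat.cast_zero, zero_smul]
    exact inf_eq_right.mpr hv
  rw [h, map_zero]

theorem compQ_le {v : X} (hv : 0 ≤ v) : compQ f e v ≤ f v :=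
  ciSup_le (fun n => hf.mono inf_le_left)

theorem compQ_add {a b : X} (ha : 0 ≤ a) (hb : 0 ≤ b) :
    compQ f e (a + b) = compQ f e a + compQ f e b := by
  apply le_antisymm
  · apply ciSup_le
    intro n
    have hne : 0 ≤ ((n:ℝ)) • e := my_smul_nonneg (by positivity) he
    have h1 : (a + b) ⊓ ((n:ℝ) • e) ≤ a ⊓ ((n:ℝ) • e) + b ⊓ ((n:ℝ) • e) :=
      my_inf_add ha hb hne
    calc f ((a + b) ⊓ ((n:ℝ) • e)) ≤ f (a ⊓ ((n:ℝ) • e) + b ⊓ ((n:ℝ) • e)) := hf.mono h1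
    _ = f (a ⊓ ((n:ℝ) • e)) + f (b ⊓ ((n:ℝ) • e)) := map_add f _ _
    _ ≤ compQ f e a + compQ f e b :=
        add_le_add (le_ciSup (compQ_bdd hf e he ha) n) (le_ciSup (compQ_bdd hf e he hb) n)
  · rw [← le_sub_iff_add_le]
    apply ciSup_le
    intro n
    rw [le_sub_iff_add_le, add_comm, ← le_sub_iff_add_le]
    apply ciSup_le
    intro m
    rw [le_sub_iff_add_le]
    have key : b ⊓ ((m:ℝ) • e) + a ⊓ ((n:ℝ) • e) ≤ (a + b) ⊓ (((m+n:ℕ):ℝ) • e) := by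
      apply le_inf
      · calc b ⊓ ((m:ℝ) • e) + a ⊓ ((n:ℝ) • e) ≤ b + a := add_le_add inf_le_left inf_le_left
        _ = a + b := add_comm b a
      · calc b ⊓ ((m:ℝ) • e) + a ⊓ ((n:ℝ) • e) ≤ (m:ℝ) • e + (n:ℝ) • e :=
            add_le_add inf_le_right inf_le_right
        _ = ((m+n:ℕ):ℝ) • e := by rw [← add_smul]; push_cast; ring_nf
    calc f (b ⊓ ((m:ℝ) • e)) + f (a ⊓ ((n:ℝ) • e)) = f (b ⊓ ((m:ℝ) • e) + a ⊓ ((n:ℝ) • e)) :=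
          (map_add f _ _).symm
    _ ≤ f ((a + b) ⊓ (((m+n:ℕ):ℝ) • e)) := hf.mono key
    _ ≤ compQ f e (a + b) := le_ciSup (compQ_bdd hf e he (by positivity)) (m+n)

theorem compQ_smul (c : ℝ) (a : X) (hc : 0 < c) (ha : 0 ≤ a) :
    compQ f e (c • a) = c * compQ f e a := by
  apply le_antisymm
  · apply ciSup_le
    intro n
    obtain ⟨m, hm⟩ := exists_nat_ge ((n:ℝ)/c)
    have h1 : (c • a) ⊓ ((n:ℝ) • e) = c • (a ⊓ (((n:ℝ)/c) • e)) := by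
      rw [my_smul_inf hc, smul_smul]
      congr 2
      field_simp
    have h2 : a ⊓ (((n:ℝ)/c) • e) ≤ a ⊓ ((m:ℝ) • e) :=
      inf_le_inf_left a (my_scalar_mono hm he)
    calc f ((c • a) ⊓ ((n:ℝ) • e)) = c * f (a ⊓ (((n:ℝ)/c) • e)) := by
          rw [h1, map_smul, smul_eq_mul]
    _ ≤ c * f (a ⊓ ((m:ℝ) • e)) := mul_le_mul_of_nonneg_left (hf.mono h2) hc.le
    _ ≤ c * compQ f e a := mul_le_mul_of_nonneg_left (le_ciSup (compQ_bdd hf e he ha) m) hc.le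
  · rw [← le_div_iff₀' hc]
    apply ciSup_le
    intro n
    rw [le_div_iff₀' hc]
    obtain ⟨m, hm⟩ := exists_nat_ge (c * n)
    have h1 : c • (a ⊓ ((n:ℝ) • e)) = (c • a) ⊓ ((c * n) • e) := by
      rw [my_smul_inf hc, smul_smul]
    have h2 : (c • a) ⊓ ((c * n) • e) ≤ (c • a) ⊓ ((m:ℝ) • e) :=
      inf_le_inf_left _ (my_scalar_mono hm he)
    calc c * f (a ⊓ ((n:ℝ) • e)) = f (c • (a ⊓ ((n:ℝ) • e))) := by
          rw [map_smul, smul_eq_mul]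
    _ ≤ f ((c • a) ⊓ ((m:ℝ) • e)) := by rw [h1]; exact hf.mono h2
    _ ≤ compQ f e (c • a) := le_ciSup (compQ_bdd hf e he (my_smul_nonneg hc.le ha)) m

theorem compQ_absbound : ∀ v : X, 0 ≤ v → |compQ f e v| ≤ ‖f‖ * ‖v‖ := by
  intro v hv
  rw [abs_of_nonneg (compQ_nonneg hf e he hv)]
  calc compQ f e v ≤ f v := compQ_le hf e he hv
  _ ≤ |f v| := le_abs_self _
  _ ≤ ‖f‖ * ‖v‖ := f.le_opNorm v

theorem compQ_self : compQ f e e = f e := by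
  apply le_antisymm (compQ_le hf e he he)
  have h1 : e ⊓ ((1:ℕ):ℝ) • e = e := by
    rw [Nat.cast_one, one_smul, inf_idem]
  calc f e = f (e ⊓ ((1:ℕ):ℝ) • e) := by rw [h1]
  _ ≤ compQ f e e := le_ciSup (compQ_bdd hf e he he) 1

theorem compQ_disj {v : X} (hv : 0 ≤ v) (hd : v ⊓ e = 0) : compQ f e v = 0 := by
  apply le_antisymm
  · apply ciSup_le
    intro n
    have := my_disjoint_nsmul hv he hd n
    rw [this, map_zero]
  · exact compQ_nonneg hf e he hv

/-- The component of `f` in the band generated by `e`, as a continuous functional. -/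
noncomputable def compCLM : X →L[ℝ] ℝ :=
  extCLM (compQ f e)
    (fun a b ha hb => compQ_add hf e he ha hb)
    (fun c a hc ha => compQ_smul hf e he c a hc ha)
    ‖f‖ (norm_nonneg f) (compQ_absbound hf e he)

theorem compCLM_posF : PosF (compCLM hf e he) := by
  intro v hv
  have : compCLM hf e he v = compQ f e v :=
    extLin_eq_on_pos (fun a b ha hb => compQ_add hf e he ha hb) hv
  rw [this]
  exact compQ_nonneg hf e he hv

theorem compCLM_le_posF : PosF (f - compCLM hf e he) := by
  intro v hv
  have h1 : compCLM hf e he v = compQ f e v :=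
    extLin_eq_on_pos (fun a b ha hb => compQ_add hf e he ha hb) hv
  simp only [ContinuousLinearMap.coe_sub', Pi.sub_apply]
  have := compQ_le hf e he hv
  rw [h1]
  linarith

end PartF

section PartG
variable (z : StrongDual ℝ (StrongDual ℝ X))

/-- The sublinear envelope of `z` on positive functionals. -/
noncomputable def ZQ (f : StrongDual ℝ X) : ℝ :=
  sSup (⇑z '' {g : StrongDual ℝ X | PosF g ∧ PosF (f - g)})

variable {z}

theorem Zset_nonempty {f : StrongDual ℝ X} (hf : PosF f) :
    (⇑z '' {g : StrongDual ℝ X | PosF g ∧ PosF (f - g)}).Nonempty := by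
  refine ⟨z 0, 0, ⟨fun v _ => by simp, ?_⟩, rfl⟩
  rw [sub_zero]
  exact hf

theorem dominated_norm {f g : StrongDual ℝ X} (hf : PosF f) (hg : PosF g) (hfg : PosF (f - g)) :
    ‖g‖ ≤ ‖f‖ := by
  apply ContinuousLinearMap.opNorm_le_bound _ (norm_nonneg f)
  intro x
  have hgf : ∀ v : X, 0 ≤ v → g v ≤ f v := by
    intro v hv
    have := hfg v hv
    simp only [ContinuousLinearMap.coe_sub', Pi.sub_apply] at this
    linarith
  have h1 : 0 ≤ g x⁺ := hg _ (posPart_nonneg x)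
  have h2 : g x⁺ ≤ ‖f‖ * ‖x‖ := by
    calc g x⁺ ≤ f x⁺ := hgf _ (posPart_nonneg x)
    _ ≤ |f x⁺| := le_abs_self _
    _ ≤ ‖f‖ * ‖x⁺‖ := f.le_opNorm _
    _ ≤ ‖f‖ * ‖x‖ := mul_le_mul_of_nonneg_left (my_norm_posPart x) (norm_nonneg f)
  have h3 : 0 ≤ g x⁻ := hg _ (negPart_nonneg x)
  have h4 : g x⁻ ≤ ‖f‖ * ‖x‖ := by
    calc g x⁻ ≤ f x⁻ := hgf _ (negPart_nonneg x)
    _ ≤ |f x⁻| := le_abs_self _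
    _ ≤ ‖f‖ * ‖x⁻‖ := f.le_opNorm _
    _ ≤ ‖f‖ * ‖x‖ := mul_le_mul_of_nonneg_left (my_norm_negPart x) (norm_nonneg f)
  have h5 : g x = g x⁺ - g x⁻ := by rw [← map_sub, posPart_sub_negPart]
  rw [Real.norm_eq_abs, h5]
  rw [abs_le]
  constructor <;> linarith

theorem Zset_bdd {f : StrongDual ℝ X} (hf : PosF f) :
    BddAbove (⇑z '' {g : StrongDual ℝ X | PosF g ∧ PosF (f - g)}) := by
  refine ⟨‖z‖ * ‖f‖, ?_⟩
  rintro r ⟨g, ⟨hg1, hg2⟩, rfl⟩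
  calc z g ≤ |z g| := le_abs_self _
  _ ≤ ‖z‖ * ‖g‖ := z.le_opNorm g
  _ ≤ ‖z‖ * ‖f‖ := mul_le_mul_of_nonneg_left (dominated_norm hf hg1 hg2) (norm_nonneg z)

theorem le_ZQ {f g : StrongDual ℝ X} (hf : PosF f) (hg : PosF g) (hfg : PosF (f - g)) :
    z g ≤ ZQ z f :=
  le_csSup (Zset_bdd hf) ⟨g, ⟨hg, hfg⟩, rfl⟩

theorem ZQ_nonneg {f : StrongDual ℝ X} (hf : PosF f) : 0 ≤ ZQ z f := by
  have h := le_ZQ (z := z) hf (g := 0) (fun v _ => by simp) (by rw [sub_zero]; exact hf)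
  simpa using h

theorem ZQ_le {f : StrongDual ℝ X} (hf : PosF f) : ZQ z f ≤ ‖z‖ * ‖f‖ := by
  apply csSup_le (Zset_nonempty hf)
  rintro r ⟨g, ⟨hg1, hg2⟩, rfl⟩
  calc z g ≤ |z g| := le_abs_self _
  _ ≤ ‖z‖ * ‖g‖ := z.le_opNorm g
  _ ≤ ‖z‖ * ‖f‖ := mul_le_mul_of_nonneg_left (dominated_norm hf hg1 hg2) (norm_nonneg z)

theorem ZQ_add {f₁ f₂ : StrongDual ℝ X} (hf₁ : PosF f₁) (hf₂ : PosF f₂) :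
    ZQ z (f₁ + f₂) = ZQ z f₁ + ZQ z f₂ := by
  have hf12 : PosF (f₁ + f₂) := fun v hv => by
    have := hf₁ v hv; have := hf₂ v hv
    simp only [ContinuousLinearMap.add_apply]
    linarith
  apply le_antisymm
  · apply csSup_le (Zset_nonempty hf12)
    rintro r ⟨g, ⟨hg1, hg2⟩, rfl⟩
    set g₁ := posCLM (g - f₂) with hg₁def
    have hg₁pos : PosF g₁ := posCLM_posF _
    have claim1 : PosF (f₁ - g₁) := by
      intro v hv
      simp only [ContinuousLinearMap.coe_sub', Pi.sub_apply]
      rw [hg₁def, posCLM_apply_pos _ hv]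
      rw [sub_nonneg]
      apply csSup_le (posFun_set_nonempty hv)
      rintro r ⟨w, ⟨h1, h2⟩, rfl⟩
      have hgw : g w ≤ f₁ w + f₂ w := by
        have := hg2 w h1
        simp only [ContinuousLinearMap.coe_sub', Pi.sub_apply,
          ContinuousLinearMap.add_apply] at this
        linarith
      have : ((g - f₂ : StrongDual ℝ X) : X →ₗ[ℝ] ℝ) w = g w - f₂ w := rfl
      rw [this]
      calc g w - f₂ w ≤ f₁ w := by linarith
      _ ≤ f₁ v := hf₁.mono h2
    have claim2 : PosF (g - g₁) := by
      intro v hv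
      simp only [ContinuousLinearMap.coe_sub', Pi.sub_apply]
      rw [hg₁def, posCLM_apply_pos _ hv, sub_nonneg]
      apply csSup_le (posFun_set_nonempty hv)
      rintro r ⟨w, ⟨h1, h2⟩, rfl⟩
      have : ((g - f₂ : StrongDual ℝ X) : X →ₗ[ℝ] ℝ) w = g w - f₂ w := rfl
      rw [this]
      have h3 : 0 ≤ f₂ w := hf₂ w h1
      calc g w - f₂ w ≤ g w := by linarith
      _ ≤ g v := hg1.mono h2
    have claim3 : PosF (f₂ - (g - g₁)) := by
      intro v hv
      simp only [ContinuousLinearMap.coe_sub', Pi.sub_apply]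
      rw [hg₁def, posCLM_apply_pos _ hv]
      have h4 : ((g - f₂ : StrongDual ℝ X) : X →ₗ[ℝ] ℝ) v ≤ posFun ((g - f₂ : StrongDual ℝ X) : X →ₗ[ℝ] ℝ) v :=
        posFun_le_of (clm_bddAbove _) hv le_rfl
      have : ((g - f₂ : StrongDual ℝ X) : X →ₗ[ℝ] ℝ) v = g v - f₂ v := rfl
      rw [this] at h4
      linarith
    have hsplit : z g = z g₁ + z (g - g₁) := by
      rw [← map_add]
      congr 1
      abel
    rw [hsplit]
    exact add_le_add (le_ZQ hf₁ hg₁pos claim1) (le_ZQ hf₂ claim2 claim3)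
  · rw [← le_sub_iff_add_le]
    apply csSup_le (Zset_nonempty hf₁)
    rintro r ⟨g₁, ⟨h11, h12⟩, rfl⟩
    rw [le_sub_iff_add_le, add_comm, ← le_sub_iff_add_le]
    apply csSup_le (Zset_nonempty hf₂)
    rintro r ⟨g₂, ⟨h21, h22⟩, rfl⟩
    rw [le_sub_iff_add_le]
    have hgsum : PosF (g₂ + g₁) := fun v hv => by
      have := h11 v hv; have := h21 v hv
      simp only [ContinuousLinearMap.add_apply]; linarith
    have hrem : PosF ((f₁ + f₂) - (g₂ + g₁)) := fun v hv => by
      have e1 := h12 v hv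
      have e2 := h22 v hv
      simp only [ContinuousLinearMap.coe_sub', Pi.sub_apply,
        ContinuousLinearMap.add_apply] at *
      linarith
    calc z g₂ + z g₁ = z (g₂ + g₁) := (map_add z _ _).symm
    _ ≤ ZQ z (f₁ + f₂) := le_ZQ hf12 hgsum hrem

theorem ZQ_smul {f : StrongDual ℝ X} (hf : PosF f) {c : ℝ} (hc : 0 < c) :
    ZQ z (c • f) = c * ZQ z f := by
  have hcf : PosF (c • f) := fun v hv => by
    have := hf v hv
    simp only [ContinuousLinearMap.smul_apply, smul_eq_mul]
    positivity
  apply le_antisymm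
  · apply csSup_le (Zset_nonempty hcf)
    rintro r ⟨g, ⟨hg1, hg2⟩, rfl⟩
    have hg1' : PosF (c⁻¹ • g) := fun v hv => by
      have := hg1 v hv
      simp only [ContinuousLinearMap.smul_apply, smul_eq_mul]
      positivity
    have hg2' : PosF (f - c⁻¹ • g) := fun v hv => by
      have := hg2 v hv
      simp only [ContinuousLinearMap.coe_sub', Pi.sub_apply,
        ContinuousLinearMap.smul_apply, smul_eq_mul] at *
      have h3 : g v ≤ c * f v := by linarith
      rw [sub_nonneg]
      calc c⁻¹ * g v ≤ c⁻¹ * (c * f v) :=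
            mul_le_mul_of_nonneg_left h3 (by positivity)
      _ = f v := by field_simp
    have he : z g = c * z (c⁻¹ • g) := by
      rw [map_smul, smul_eq_mul, ← mul_assoc, mul_inv_cancel₀ hc.ne', one_mul]
    rw [he]
    exact mul_le_mul_of_nonneg_left (le_ZQ hf hg1' hg2') hc.le
  · rw [← le_div_iff₀' hc]
    apply csSup_le (Zset_nonempty hf)
    rintro r ⟨g, ⟨hg1, hg2⟩, rfl⟩
    rw [le_div_iff₀' hc]
    have hg1' : PosF (c • g) := fun v hv => by
      have := hg1 v hv
      simp only [ContinuousLinearMap.smul_apply, smul_eq_mul]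
      positivity
    have hg2' : PosF (c • f - c • g) := fun v hv => by
      have := hg2 v hv
      simp only [ContinuousLinearMap.coe_sub', Pi.sub_apply,
        ContinuousLinearMap.smul_apply, smul_eq_mul] at *
      nlinarith
    have : c * z g = z (c • g) := by rw [map_smul, smul_eq_mul]
    rw [this]
    have hrw : c • f - c • g = c • f - c • g := rfl
    exact le_ZQ hcf hg1' hg2'
end PartG

section PartH
variable (z : StrongDual ℝ (StrongDual ℝ X))

theorem Zsplit {f p q : StrongDual ℝ X} (hp : PosF p) (hq : PosF q) (hpq : f = p - q) :
    ZQ z (posCLM f) - ZQ z (posCLM f - f) = ZQ z p - ZQ z q := by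
  have hposf : PosF (posCLM f) := posCLM_posF f
  have hposf' : PosF (posCLM f - f) := posCLM_sub_posF f
  have key : posCLM f + q = p + (posCLM f - f) := by
    rw [hpq]; abel
  have e1 : ZQ z (posCLM f + q) = ZQ z (posCLM f) + ZQ z q := ZQ_add hposf hq
  have e2 : ZQ z (p + (posCLM f - f)) = ZQ z p + ZQ z (posCLM f - f) := ZQ_add hp hposf'
  rw [key, e2] at e1
  linarith

/-- The linear extension of the envelope `ZQ z` to the whole dual space. -/
noncomputable def zExt : StrongDual ℝ (StrongDual ℝ X) :=
  LinearMap.mkContinuous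
    { toFun := fun f => ZQ z (posCLM f) - ZQ z (posCLM f - f)
      map_add' := by
        intro f g
        show ZQ z (posCLM (f + g)) - ZQ z (posCLM (f + g) - (f + g))
          = (ZQ z (posCLM f) - ZQ z (posCLM f - f)) + (ZQ z (posCLM g) - ZQ z (posCLM g - g))
        have h1 := Zsplit z (f := f + g)
          (p := posCLM f + posCLM g) (q := (posCLM f - f) + (posCLM g - g))
          (fun v hv => add_nonneg (posCLM_posF f v hv) (posCLM_posF g v hv))
          (fun v hv => add_nonneg (posCLM_sub_posF f v hv) (posCLM_sub_posF g v hv))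
          (by abel)
        rw [h1, ZQ_add (posCLM_posF f) (posCLM_posF g),
          ZQ_add (posCLM_sub_posF f) (posCLM_sub_posF g)]
        ring
      map_smul' := by
        intro c f
        show ZQ z (posCLM (c • f)) - ZQ z (posCLM (c • f) - (c • f))
          = c * (ZQ z (posCLM f) - ZQ z (posCLM f - f))
        rcases lt_trichotomy c 0 with hc | hc | hc
        · have hc' : 0 < -c := by linarith
          have h1 := Zsplit z (f := c • f)
            (p := (-c) • (posCLM f - f)) (q := (-c) • posCLM f)
            (fun v hv => by
              have := posCLM_sub_posF f v hv
              simp only [ContinuousLinearMap.smul_apply, smul_eq_mul]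
              positivity)
            (fun v hv => by
              have := posCLM_posF f v hv
              simp only [ContinuousLinearMap.smul_apply, smul_eq_mul]
              positivity)
            (by rw [smul_sub]; module)
          rw [h1, ZQ_smul (posCLM_sub_posF f) hc', ZQ_smul (posCLM_posF f) hc']
          ring
        · subst hc
          have h1 := Zsplit z (f := (0:ℝ) • f) (p := 0) (q := 0)
            (fun v _ => by simp) (fun v _ => by simp) (by simp)
          rw [h1]
          ring
        · have h1 := Zsplit z (f := c • f)
            (p := c • posCLM f) (q := c • (posCLM f - f))
            (fun v hv => by
              have := posCLM_posF f v hv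
              simp only [ContinuousLinearMap.smul_apply, smul_eq_mul]
              positivity)
            (fun v hv => by
              have := posCLM_sub_posF f v hv
              simp only [ContinuousLinearMap.smul_apply, smul_eq_mul]
              positivity)
            (by rw [smul_sub]; abel)
          rw [h1, ZQ_smul (posCLM_posF f) hc, ZQ_smul (posCLM_sub_posF f) hc]
          ring }
    (5 * ‖z‖)
    (by
      intro f
      simp only [LinearMap.coe_mk, AddHom.coe_mk]
      have b1 : |ZQ z (posCLM f)| ≤ ‖z‖ * (2 * ‖f‖) := by
        rw [abs_of_nonneg (ZQ_nonneg (posCLM_posF f))]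
        calc ZQ z (posCLM f) ≤ ‖z‖ * ‖posCLM f‖ := ZQ_le (posCLM_posF f)
        _ ≤ ‖z‖ * (2 * ‖f‖) :=
            mul_le_mul_of_nonneg_left (posCLM_norm_le f) (norm_nonneg z)
      have b2 : |ZQ z (posCLM f - f)| ≤ ‖z‖ * (3 * ‖f‖) := by
        rw [abs_of_nonneg (ZQ_nonneg (posCLM_sub_posF f))]
        calc ZQ z (posCLM f - f) ≤ ‖z‖ * ‖posCLM f - f‖ := ZQ_le (posCLM_sub_posF f)
        _ ≤ ‖z‖ * (3 * ‖f‖) := by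
            apply mul_le_mul_of_nonneg_left _ (norm_nonneg z)
            calc ‖posCLM f - f‖ ≤ ‖posCLM f‖ + ‖f‖ := norm_sub_le _ _
            _ ≤ 3 * ‖f‖ := by linarith [posCLM_norm_le f]
      rw [Real.norm_eq_abs]
      calc |ZQ z (posCLM f) - ZQ z (posCLM f - f)|
          ≤ |ZQ z (posCLM f)| + |ZQ z (posCLM f - f)| := abs_sub _ _
      _ ≤ 5 * ‖z‖ * ‖f‖ := by nlinarith [norm_nonneg f, norm_nonneg z])

theorem zExt_eval_pos {f : StrongDual ℝ X} (hf : PosF f) : zExt z f = ZQ z f := by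
  have h1 : zExt z f = ZQ z (posCLM f) - ZQ z (posCLM f - f) := rfl
  have h2 := Zsplit z (f := f) (p := f) (q := 0) hf (fun v _ => by simp) (by rw [sub_zero])
  have h3 : ZQ z (0 : StrongDual ℝ X) = 0 := by
    apply le_antisymm
    · apply csSup_le (Zset_nonempty (fun v _ => by simp))
      rintro r ⟨g, ⟨hg1, hg2⟩, rfl⟩
      have hg0 : ∀ v : X, 0 ≤ v → g v = 0 := by
        intro v hv
        have e1 := hg1 v hv
        have e2 := hg2 v hv
        simp only [ContinuousLinearMap.coe_sub', Pi.sub_apply,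
          ContinuousLinearMap.zero_apply] at e2
        linarith
      have : g = 0 := by
        ext x
        have hx : g x = g x⁺ - g x⁻ := by rw [← map_sub, posPart_sub_negPart]
        rw [hx, hg0 _ (posPart_nonneg x), hg0 _ (negPart_nonneg x)]
        simp
      rw [this]
      simp
    · exact ZQ_nonneg (fun v _ => by simp)
  rw [h1, h2, h3]
  ring

/-- If `z` bounds the evaluations of `x` against positive functionals, then `2 • zExt z`
bounds evaluations of `|x|`. -/
theorem abs_eval_le (x : X)
    (hbound : ∀ g : StrongDual ℝ X, PosF g → -(z g) ≤ g x ∧ g x ≤ z g)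
    {f : StrongDual ℝ X} (hf : PosF f) : f |x| ≤ 2 * ZQ z f := by
  have hxp : (0:X) ≤ x⁺ := posPart_nonneg x
  have hxn : (0:X) ≤ x⁻ := negPart_nonneg x
  -- positive part
  have hp : f x⁺ ≤ ZQ z f := by
    set g := compCLM hf (x⁺) hxp with hgdef
    have hgx : g x = f x⁺ := by
      have h1 : g x = compQ f (x⁺) x⁺ - compQ f (x⁺) x⁻ := rfl
      rw [h1, compQ_self hf (x⁺) hxp, compQ_disj hf (x⁺) hxp hxn
        (by rw [inf_comm]; exact posPart_inf_negPart_eq_zero x)]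
      ring
    have hgpos : PosF g := compCLM_posF hf (x⁺) hxp
    have hgle : PosF (f - g) := compCLM_le_posF hf (x⁺) hxp
    calc f x⁺ = g x := hgx.symm
    _ ≤ z g := (hbound g hgpos).2
    _ ≤ ZQ z f := le_ZQ hf hgpos hgle
  -- negative part
  have hn : f x⁻ ≤ ZQ z f := by
    set g := compCLM hf (x⁻) hxn with hgdef
    have hgx : g x = -(f x⁻) := by
      have h1 : g x = compQ f (x⁻) x⁺ - compQ f (x⁻) x⁻ := rfl
      rw [h1, compQ_self hf (x⁻) hxn, compQ_disj hf (x⁻) hxn hxp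
        (posPart_inf_negPart_eq_zero x)]
      ring
    have hgpos : PosF g := compCLM_posF hf (x⁻) hxn
    have hgle : PosF (f - g) := compCLM_le_posF hf (x⁻) hxn
    have := (hbound g hgpos).1
    rw [hgx] at this
    calc f x⁻ ≤ z g := by linarith
    _ ≤ ZQ z f := le_ZQ hf hgpos hgle
  have habs : f |x| = f x⁺ + f x⁻ := by
    rw [← map_add, posPart_add_negPart]
  rw [habs]
  linarith

/-- Norm bound for elements whose double-dual evaluations on positive functionals
are controlled by `z`. -/
theorem norm_le_of_posbound (x : X)
    (hbound : ∀ g : StrongDual ℝ X, PosF g → -(z g) ≤ g x ∧ g x ≤ z g) :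
    ‖x‖ ≤ 5 * ‖z‖ := by
  have key : ∀ f : StrongDual ℝ X, |f x| ≤ 5 * ‖z‖ * ‖f‖ := by
    intro f
    have hp := posCLM_posF f
    have hp' := posCLM_sub_posF f
    have h1 : |posCLM f x| ≤ 2 * (‖z‖ * ‖f‖) := by
      have hb := hbound _ hp
      have h2 : |posCLM f x| ≤ z (posCLM f) := abs_le.mpr ⟨hb.1, hb.2⟩
      calc |posCLM f x| ≤ z (posCLM f) := h2
      _ ≤ |z (posCLM f)| := le_abs_self _
      _ ≤ ‖z‖ * ‖posCLM f‖ := z.le_opNorm _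
      _ ≤ 2 * (‖z‖ * ‖f‖) := by
          have := mul_le_mul_of_nonneg_left (posCLM_norm_le f) (norm_nonneg z)
          linarith
    have h3 : |(posCLM f - f) x| ≤ 3 * (‖z‖ * ‖f‖) := by
      have hb := hbound _ hp'
      have h4 : |(posCLM f - f) x| ≤ z (posCLM f - f) := abs_le.mpr ⟨hb.1, hb.2⟩
      calc |(posCLM f - f) x| ≤ z (posCLM f - f) := h4
      _ ≤ |z (posCLM f - f)| := le_abs_self _
      _ ≤ ‖z‖ * ‖posCLM f - f‖ := z.le_opNorm _
      _ ≤ 3 * (‖z‖ * ‖f‖) := by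
          have h5 : ‖posCLM f - f‖ ≤ 3 * ‖f‖ := by
            calc ‖posCLM f - f‖ ≤ ‖posCLM f‖ + ‖f‖ := norm_sub_le _ _
            _ ≤ 3 * ‖f‖ := by linarith [posCLM_norm_le f]
          have := mul_le_mul_of_nonneg_left h5 (norm_nonneg z)
          linarith
    have h6 : f x = posCLM f x - (posCLM f - f) x := by
      simp only [ContinuousLinearMap.coe_sub', Pi.sub_apply]
      ring
    rw [h6]
    calc |posCLM f x - (posCLM f - f) x| ≤ |posCLM f x| + |(posCLM f - f) x| := abs_sub _ _
    _ ≤ 5 * ‖z‖ * ‖f‖ := by linarith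
  have hiso : ‖inclusionInDoubleDual ℝ X x‖ = ‖x‖ :=
    (inclusionInDoubleDualLi ℝ (E := X)).norm_map x
  rw [← hiso]
  apply ContinuousLinearMap.opNorm_le_bound _ (by positivity)
  intro f
  exact key f

end PartH

section PartI
open Filter

/-- The key uniform estimate: the "far parts" of the tail of the net can be made
uniformly small by a single positive vector. -/
theorem key_uniform [CompleteSpace X]
    (y : X →ₗ[ℝ] ℝ) (hy : OrdContE y)
    (hdseq : ∀ xs : ℕ → X, (∀ m n, m ≠ n → |xs m| ⊓ |xs n| = 0) →
      (∃ z : StrongDual ℝ (StrongDual ℝ X), ∀ n, ∀ f : StrongDual ℝ X,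
        (∀ v : X, 0 ≤ v → 0 ≤ f v) →
        -(z f) ≤ (inclusionInDoubleDual ℝ X (xs n)) f ∧
          (inclusionInDoubleDual ℝ X (xs n)) f ≤ z f) →
      Filter.Tendsto (fun n => y (xs n)) Filter.atTop (nhds 0))
    {ι : Type*} [Preorder ι] [Nonempty ι] (x : ι → X) (α₀ : ι) (z : StrongDual ℝ (StrongDual ℝ X))
    (hz : ∀ α, α₀ ≤ α → ∀ f : StrongDual ℝ X, PosF f → -(z f) ≤ f (x α) ∧ f (x α) ≤ z f)
    {ε : ℝ} (hε : 0 < ε) :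
    ∃ u : X, 0 ≤ u ∧ ∀ α, α₀ ≤ α → rhoFun y ((|x α| - u)⁺) ≤ ε := by
  by_contra hcon
  push_neg at hcon
  have hC : ∀ u : X, ∃ α, α₀ ≤ α ∧ ε < rhoFun y ((|x α| - (u ⊔ 0))⁺) := by
    intro u
    obtain ⟨α, h1, h2⟩ := hcon (u ⊔ 0) le_sup_right
    exact ⟨α, h1, h2⟩
  choose pick hpick1 hpick2 using hC
  -- the recursively chosen indices and partial sums
  set st : ℕ → ι × X := fun n => Nat.rec (motive := fun _ => ι × X)
    (pick 0, |x (pick 0)|)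
    (fun n p => (pick ((4:ℝ)^(n+1) • p.2), p.2 + |x (pick ((4:ℝ)^(n+1) • p.2))|)) n with hst
  set a : ℕ → ι := fun n => (st n).1 with ha
  set S : ℕ → X := fun n => (st n).2 with hS
  set g : ℕ → X := fun n => |x (a n)| with hg
  have hSdef : ∀ n, S (n+1) = S n + g (n+1) := fun n => rfl
  have haq : ∀ n, a (n+1) = pick ((4:ℝ)^(n+1) • S n) := fun n => rfl
  have hgnn : ∀ n, (0:X) ≤ g n := fun n => abs_nonneg _
  have hSnn : ∀ n, (0:X) ≤ S n := by
    intro n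
    induction n with
    | zero => exact abs_nonneg _
    | succ n ih => rw [hSdef n]; exact add_nonneg ih (hgnn (n+1))
  have hSmono : ∀ m n, m ≤ n → S m ≤ S n := by
    intro m n hmn
    induction n with
    | zero => simp at hmn; subst hmn; exact le_refl _
    | succ n ih =>
      rcases Nat.lt_or_ge m (n+1) with h | h
      · have := ih (by omega)
        rw [hSdef n]
        calc S m ≤ S n := this
        _ ≤ S n + g (n+1) := le_add_of_nonneg_right (hgnn (n+1))
      · have : m = n + 1 := by omega
        subst this; exact le_refl _
  have hgS : ∀ k n, k ≤ n → g k ≤ S n := by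
    intro k n hkn
    have h1 : g k ≤ S k := by
      cases k with
      | zero => exact le_refl _
      | succ k => rw [hSdef k]; exact le_add_of_nonneg_left (hSnn k)
    exact h1.trans (hSmono k n hkn)
  have hα₀ : ∀ n, α₀ ≤ a n := by
    intro n
    cases n with
    | zero => exact hpick1 0
    | succ n => rw [haq n]; exact hpick1 _
  have hkey : ∀ n, ε < rhoFun y ((g (n+1) - (4:ℝ)^(n+1) • S n)⁺) := by
    intro n
    have h1 := hpick2 ((4:ℝ)^(n+1) • S n)
    have h2 : ((4:ℝ)^(n+1) • S n) ⊔ 0 = (4:ℝ)^(n+1) • S n :=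
      sup_eq_left.mpr (my_smul_nonneg (by positivity) (hSnn n))
    rw [h2] at h1
    exact h1
  -- norm bound for the chosen elements
  have hnorm : ∀ n, ‖g n‖ ≤ 5 * ‖z‖ := by
    intro n
    rw [hg]
    simp only
    rw [norm_abs_eq_norm]
    exact norm_le_of_posbound z (x (a n)) (fun gg hgg => hz (a n) (hα₀ n) gg hgg)
  -- the series
  set fs : ℕ → X := fun k => ((2:ℝ)⁻¹)^k • g k with hfs
  have hfsnn : ∀ k, 0 ≤ fs k := fun k => my_smul_nonneg (by positivity) (hgnn k)
  have hsum : Summable fs := by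
    apply Summable.of_norm
    apply Summable.of_nonneg_of_le (fun k => norm_nonneg _) (fun k => ?_)
      (Summable.mul_right (5 * ‖z‖)
        (summable_geometric_of_lt_one (r := (2⁻¹:ℝ)) (by norm_num) (by norm_num)))
    show ‖((2:ℝ)⁻¹)^k • g k‖ ≤ (2⁻¹:ℝ)^k * (5 * ‖z‖)
    rw [norm_smul]
    have he : ‖((2:ℝ)⁻¹)^k‖ = (2⁻¹:ℝ)^k := by
      rw [norm_pow, Real.norm_eq_abs, abs_of_nonneg]; norm_num
    rw [he]
    exact mul_le_mul_of_nonneg_left (hnorm k) (by positivity)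
  set w : X := ∑' k, fs k with hw
  have hwge : ∀ k, ((2:ℝ)⁻¹)^k • g k ≤ w :=
    fun k => Summable.le_tsum hsum k (fun j _ => hfsnn j)
  have hwnn : (0:X) ≤ w := tsum_nonneg hfsnn
  -- the disjoint sequence
  set v : ℕ → X := fun n => (g (n+1) - (4:ℝ)^(n+1) • S n - ((2:ℝ)⁻¹)^n • w)⁺ with hv
  have hvnn : ∀ n, 0 ≤ v n := fun n => posPart_nonneg _
  have hvle : ∀ n, v n ≤ g (n+1) := by
    intro n
    rw [hv]
    simp only
    rw [posPart_def]
    apply sup_le _ (hgnn (n+1))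
    have h1 : 0 ≤ (4:ℝ)^(n+1) • S n + ((2:ℝ)⁻¹)^n • w :=
      add_nonneg (my_smul_nonneg (by positivity) (hSnn n))
        (my_smul_nonneg (by positivity) hwnn)
    calc g (n+1) - (4:ℝ)^(n+1) • S n - ((2:ℝ)⁻¹)^n • w
        = g (n+1) - ((4:ℝ)^(n+1) • S n + ((2:ℝ)⁻¹)^n • w) := by abel
    _ ≤ g (n+1) := sub_le_self _ h1
  have hdisj : ∀ m n, m < n → v m ⊓ v n = 0 := by
    intro m n hmn
    have h1 : v n ≤ (g (n+1) - (4:ℝ)^(n+1) • g (m+1))⁺ := by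
      apply sup_le_sup_right
      have e1 : (4:ℝ)^(n+1) • g (m+1) ≤ (4:ℝ)^(n+1) • S n :=
        smul_le_smul_of_nonneg_left (hgS (m+1) n (by omega)) (by positivity)
      have e2 : 0 ≤ ((2:ℝ)⁻¹)^n • w := my_smul_nonneg (by positivity) hwnn
      calc g (n+1) - (4:ℝ)^(n+1) • S n - ((2:ℝ)⁻¹)^n • w
          ≤ g (n+1) - (4:ℝ)^(n+1) • S n := by
            calc g (n+1) - (4:ℝ)^(n+1) • S n - ((2:ℝ)⁻¹)^n • w
                ≤ g (n+1) - (4:ℝ)^(n+1) • S n - 0 := sub_le_sub_left e2 _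
            _ = g (n+1) - (4:ℝ)^(n+1) • S n := by abel
      _ ≤ g (n+1) - (4:ℝ)^(n+1) • g (m+1) := sub_le_sub_left e1 _
    have h2 : v m ≤ (g (m+1) - (((2:ℝ)⁻¹)^(m+n+1)) • g (n+1))⁺ := by
      apply sup_le_sup_right
      have e1 : ((2:ℝ)⁻¹)^m • (((2:ℝ)⁻¹)^(n+1) • g (n+1)) ≤ ((2:ℝ)⁻¹)^m • w :=
        smul_le_smul_of_nonneg_left (hwge (n+1)) (by positivity)
      rw [smul_smul, ← pow_add] at e1
      have e3 : m + (n+1) = m + n + 1 := by omega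
      rw [e3] at e1
      have e2 : 0 ≤ (4:ℝ)^(m+1) • S m := my_smul_nonneg (by positivity) (hSnn m)
      calc g (m+1) - (4:ℝ)^(m+1) • S m - ((2:ℝ)⁻¹)^m • w
          ≤ g (m+1) - ((2:ℝ)⁻¹)^m • w := by
            calc g (m+1) - (4:ℝ)^(m+1) • S m - ((2:ℝ)⁻¹)^m • w
                = g (m+1) - ((2:ℝ)⁻¹)^m • w - (4:ℝ)^(m+1) • S m := by abel
            _ ≤ g (m+1) - ((2:ℝ)⁻¹)^m • w - 0 := sub_le_sub_left e2 _
            _ = g (m+1) - ((2:ℝ)⁻¹)^m • w := by abel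
      _ ≤ g (m+1) - (((2:ℝ)⁻¹)^(m+n+1)) • g (n+1) := sub_le_sub_left e1 _
    have hst' : (1:ℝ) ≤ (4:ℝ)^(n+1) * ((2:ℝ)⁻¹)^(m+n+1) := by
      have e1 : (4:ℝ)^(n+1) = 2^(2*(n+1)) := by rw [pow_mul]; norm_num
      have e2 : ((2:ℝ)⁻¹)^(m+n+1) = ((2:ℝ)^(m+n+1))⁻¹ := by rw [inv_pow]
      have e3 : (0:ℝ) < (2:ℝ)^(m+n+1) := by positivity
      rw [e1, e2, ← div_eq_mul_inv, le_div_iff₀ e3, one_mul]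
      apply pow_le_pow_right₀ (by norm_num)
      omega
    have hdj := my_disjoint (a := g (n+1)) (b := g (m+1)) (hgnn (m+1))
      (s := (4:ℝ)^(n+1)) (t := ((2:ℝ)⁻¹)^(m+n+1)) (by positivity) hst'
    apply le_antisymm _ (le_inf (hvnn m) (hvnn n))
    calc v m ⊓ v n ≤ (g (m+1) - (((2:ℝ)⁻¹)^(m+n+1)) • g (n+1))⁺
        ⊓ (g (n+1) - (4:ℝ)^(n+1) • g (m+1))⁺ := inf_le_inf h2 h1
    _ = (g (n+1) - (4:ℝ)^(n+1) • g (m+1))⁺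
        ⊓ (g (m+1) - (((2:ℝ)⁻¹)^(m+n+1)) • g (n+1))⁺ := inf_comm _ _
    _ = 0 := hdj
  -- lower bound for the modulus of the disjoint vectors
  have hrho : ∀ n, ε < rhoFun y (v n) + ((2:ℝ)⁻¹)^n * rhoFun y w := by
    intro n
    have hA : (g (n+1) - (4:ℝ)^(n+1) • S n)⁺ ≤ v n + ((2:ℝ)⁻¹)^n • w := by
      rw [posPart_def]
      apply sup_le
      · have hle : g (n+1) - (4:ℝ)^(n+1) • S n - ((2:ℝ)⁻¹)^n • w ≤ v n := by
          rw [hv]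
          simp only
          exact le_posPart _
        calc g (n+1) - (4:ℝ)^(n+1) • S n
            = (g (n+1) - (4:ℝ)^(n+1) • S n - ((2:ℝ)⁻¹)^n • w) + ((2:ℝ)⁻¹)^n • w := by abel
        _ ≤ v n + ((2:ℝ)⁻¹)^n • w := add_le_add_left hle _
      · exact add_nonneg (hvnn n) (my_smul_nonneg (by positivity) hwnn)
    have h1 : rhoFun y ((g (n+1) - (4:ℝ)^(n+1) • S n)⁺) ≤
        rhoFun y (v n) + ((2:ℝ)⁻¹)^n * rhoFun y w := by
      calc rhoFun y ((g (n+1) - (4:ℝ)^(n+1) • S n)⁺)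
          ≤ rhoFun y (v n + ((2:ℝ)⁻¹)^n • w) := rho_mono hy (posPart_nonneg _) hA
      _ = rhoFun y (v n) + rhoFun y (((2:ℝ)⁻¹)^n • w) :=
          rho_add hy (hvnn n) (my_smul_nonneg (by positivity) hwnn)
      _ = rhoFun y (v n) + ((2:ℝ)⁻¹)^n * rhoFun y w := by
          rw [rho_smul hy (by positivity) hwnn]
    exact lt_of_lt_of_le (hkey n) h1
  -- choose N with small residual
  have hδ : ∃ N : ℕ, ((2:ℝ)⁻¹)^N * rhoFun y w < ε/2 := by
    have htend : Filter.Tendsto (fun j : ℕ => ((2:ℝ)⁻¹)^j * rhoFun y w) atTop (nhds 0) := by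
      have := (tendsto_pow_atTop_nhds_zero_of_lt_one (r := (2⁻¹:ℝ))
        (by norm_num) (by norm_num)).mul_const (rhoFun y w)
      simpa using this
    exact (htend.eventually (eventually_lt_nhds (show (0:ℝ) < ε/2 by linarith))).exists
  obtain ⟨N, hN⟩ := hδ
  -- extract witness vectors
  have hwit : ∀ k : ℕ, ∃ w' : X, 0 ≤ w' ∧ w' ≤ v (N + k) ∧ ε/4 < |y w'| := by
    intro k
    have h1 : ε/2 < rhoFun y (v (N+k)) := by
      have h3 := hrho (N+k)
      have h4 : ((2:ℝ)⁻¹)^(N+k) * rhoFun y w ≤ ((2:ℝ)⁻¹)^N * rhoFun y w := by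
        apply mul_le_mul_of_nonneg_right _ (rho_nonneg hy hwnn)
        apply pow_le_pow_of_le_one (by norm_num) (by norm_num)
        omega
      linarith
    obtain ⟨w', hw1, hw2, hw3⟩ := rho_witness hy (hvnn (N+k)) (by linarith : (0:ℝ) ≤ ε/2) h1
    exact ⟨w', hw1, hw2, by linarith [hw3]⟩
  choose sq hsq1 hsq2 hsq3 using hwit
  -- apply the disjoint-sequence hypothesis
  have hd : ∀ m n : ℕ, m ≠ n → |sq m| ⊓ |sq n| = 0 := by
    intro m n hmn
    have habs : ∀ k, |sq k| = sq k := fun k => abs_of_nonneg (hsq1 k)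
    rw [habs, habs]
    apply le_antisymm _ (le_inf (hsq1 m) (hsq1 n))
    rcases Nat.lt_or_ge m n with h | h
    · calc sq m ⊓ sq n ≤ v (N+m) ⊓ v (N+n) := inf_le_inf (hsq2 m) (hsq2 n)
      _ = 0 := hdisj (N+m) (N+n) (by omega)
    · have h' : n < m := by omega
      calc sq m ⊓ sq n ≤ v (N+m) ⊓ v (N+n) := inf_le_inf (hsq2 m) (hsq2 n)
      _ = v (N+n) ⊓ v (N+m) := inf_comm _ _
      _ = 0 := hdisj (N+n) (N+m) (by omega)
  have hbd : ∃ z' : StrongDual ℝ (StrongDual ℝ X), ∀ n, ∀ f : StrongDual ℝ X,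
      (∀ vv : X, 0 ≤ vv → 0 ≤ f vv) →
      -(z' f) ≤ (inclusionInDoubleDual ℝ X (sq n)) f ∧
        (inclusionInDoubleDual ℝ X (sq n)) f ≤ z' f := by
    refine ⟨(2:ℝ) • zExt z, ?_⟩
    intro n f hf
    have hposf : PosF f := hf
    have h0 : (inclusionInDoubleDual ℝ X (sq n)) f = f (sq n) := rfl
    have hzq : ((2:ℝ) • zExt z) f = 2 * ZQ z f := by
      rw [ContinuousLinearMap.smul_apply, smul_eq_mul, zExt_eval_pos z hposf]
    have hup : f (sq n) ≤ 2 * ZQ z f := by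
      calc f (sq n) ≤ f (v (N+n)) := hposf.mono (hsq2 n)
      _ ≤ f (g (N+n+1)) := hposf.mono (hvle (N+n))
      _ = f (|x (a (N+n+1))|) := rfl
      _ ≤ 2 * ZQ z f := abs_eval_le z (x (a (N+n+1)))
            (fun gg hgg => hz _ (hα₀ (N+n+1)) gg hgg) hposf
    have hlo : 0 ≤ f (sq n) := hposf _ (hsq1 n)
    have hz2 : 0 ≤ 2 * ZQ z f := by
      have := ZQ_nonneg (z := z) hposf
      linarith
    rw [h0, hzq]
    constructor <;> linarith
  have htend := hdseq sq hd hbd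
  have hev := Metric.tendsto_atTop.mp htend (ε/4) (by linarith)
  obtain ⟨K, hK⟩ := hev
  have h1 := hK K le_rfl
  rw [Real.dist_eq, sub_zero] at h1
  exact absurd h1 (not_lt.mpr (le_of_lt (hsq3 K)))

end PartI

end Proof19Machinery
open NormedSpace in
/-- If an order continuous functional `y` annihilates (in the limit) every
disjoint b-order bounded sequence, then `y(x_α) → 0` for every eventually
b-order bounded uo-null net. -/
theorem statement19 {X : Type u} [NormedAddCommGroup X] [Lattice X] [IsOrderedAddMonoid X] [HasSolidNorm X] [NormedSpace ℝ X]
    [CompleteSpace X] [PosSMulMono ℝ X]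
    (y : X →ₗ[ℝ] ℝ) (hy : OrdContE y)
    (hdseq : ∀ x : ℕ → X, (∀ m n, m ≠ n → |x m| ⊓ |x n| = 0) →
      (∃ z : StrongDual ℝ (StrongDual ℝ X), ∀ n, ∀ f : StrongDual ℝ X,
        (∀ v : X, 0 ≤ v → 0 ≤ f v) →
        -(z f) ≤ (inclusionInDoubleDual ℝ X (x n)) f ∧
          (inclusionInDoubleDual ℝ X (x n)) f ≤ z f) →
      Filter.Tendsto (fun n => y (x n)) Filter.atTop (nhds 0))
    {ι : Type v} [Preorder ι] [Nonempty ι] [IsDirected ι (· ≤ ·)]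
    (x : ι → X) (huo : uoConvTo x 0)
    (hob : ∃ (z : StrongDual ℝ (StrongDual ℝ X)) (α₀ : ι), ∀ α, α₀ ≤ α →
      ∀ f : StrongDual ℝ X, (∀ v : X, 0 ≤ v → 0 ≤ f v) →
      -(z f) ≤ (inclusionInDoubleDual ℝ X (x α)) f ∧
        (inclusionInDoubleDual ℝ X (x α)) f ≤ z f) :
    Filter.Tendsto (fun α => y (x α)) Filter.atTop (nhds 0) := by

  rw [NormedAddCommGroup.tendsto_nhds_zero]
  intro ε hε
  obtain ⟨z, α₀, hob'⟩ := hob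
  have hz : ∀ α, α₀ ≤ α → ∀ f : StrongDual ℝ X, PosF f → -(z f) ≤ f (x α) ∧ f (x α) ≤ z f :=
    fun α hα f hf => hob' α hα f hf
  obtain ⟨u, hu0, hu⟩ := key_uniform y hy hdseq x α₀ z hz (show (0:ℝ) < ε/3 by linarith)
  obtain ⟨D, hne, hdir, hglb, hconv⟩ := huo u hu0
  obtain ⟨d, hdD, hd_small⟩ := rho_ordcont hy D hne hdir hglb (show (0:ℝ) < ε/3 by linarith)
  obtain ⟨α₁, hα₁⟩ := hconv d hdD
  obtain ⟨α₂, hα₂₀, hα₂₁⟩ := exists_ge_ge α₀ α₁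
  filter_upwards [Filter.Ici_mem_atTop α₂] with α hα
  have hαα₀ : α₀ ≤ α := le_trans hα₂₀ hα
  have hαα₁ : α₁ ≤ α := le_trans hα₂₁ hα
  have h1 : |x α| ⊓ u ≤ d := by
    have := (hα₁ α hαα₁).2
    simpa using this
  have hinf_nn : (0:X) ≤ |x α| ⊓ u := le_inf (abs_nonneg _) hu0
  have hrho1 : rhoFun y (|x α| ⊓ u) < ε/3 :=
    lt_of_le_of_lt (rho_mono hy hinf_nn h1) hd_small
  have hrho2 : rhoFun y ((|x α| - u)⁺) ≤ ε/3 := hu α hαα₀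
  have habs : |y (x α)| ≤ rhoFun y |x α| := abs_le_rho hy le_rfl
  have hdecomp : rhoFun y |x α| = rhoFun y (|x α| ⊓ u) + rhoFun y ((|x α| - u)⁺) := by
    calc rhoFun y |x α| = rhoFun y (|x α| ⊓ u + (|x α| - u)⁺) := by
          rw [← my_decomp]
    _ = rhoFun y (|x α| ⊓ u) + rhoFun y ((|x α| - u)⁺) :=
        rho_add hy hinf_nn (posPart_nonneg _)
  rw [Real.norm_eq_abs]
  calc |y (x α)| ≤ rhoFun y |x α| := habs
  _ = rhoFun y (|x α| ⊓ u) + rhoFun y ((|x α| - u)⁺) := hdecomp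
  _ < ε := by linarith
end
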